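/- arXiv:2301.00071 — 3 statements merged into one kernel-verified Lean document; each statement's English description precedes it below -/
import Mathlib

section
/- For all integers l ≥ 0 and all α, β with Re(α) > -1/2, Re(β) > -1/2, the integral ∫_{-1}^{1} (P_l^{(α,β)}(t))^2 (1-t)^{2α}(1+t)^{2β} dt equals (2^{2α+2β+1}/(l!)^2) · B(2α+1, 2β+1) · W_l(α,β)/(2α+2β+2)_{2l}, where W_l(α,β) = Σ_{k=0}^{2l} ((-1)^{l+k}/k!) ⟨2l⟩_k ⟨α+l⟩_k ⟨β+l⟩_{2l-k} (2α+1)_{2l-k} (2β+1)_k. -/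
open MeasureTheory intervalIntegral Finset

noncomputable def ascPoch (a : ℂ) (k : ℕ) : ℂ := (ascPochhammer ℂ k).eval a

noncomputable def descPoch (a : ℂ) (k : ℕ) : ℂ := (descPochhammer ℂ k).eval a

noncomputable def betaFn (a b : ℂ) : ℂ := Complex.Gamma a * Complex.Gamma b / Complex.Gamma (a + b)

/-- Jacobi polynomial via Rodrigues' formula, as a function of a real variable. -/
noncomputable def jacobiP (l : ℕ) (α β : ℂ) (t : ℝ) : ℂ :=
  ((-1 : ℂ) ^ l / (2 ^ l * (l.factorial : ℂ))) * (1 - (t : ℂ)) ^ (-α) * (1 + (t : ℂ)) ^ (-β) *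
    iteratedDeriv l (fun s : ℝ => (1 - (s : ℂ)) ^ ((l : ℂ) + α) * (1 + (s : ℂ)) ^ ((l : ℂ) + β)) t

/-- The polynomial `W_l(α,β)`. -/
noncomputable def W (l : ℕ) (α β : ℂ) : ℂ :=
  ∑ k ∈ range (2 * l + 1),
    ((-1 : ℂ) ^ (l + k) / (k.factorial : ℂ)) * descPoch (2 * l) k * descPoch (α + l) k *
      descPoch (β + l) (2 * l - k) * ascPoch (2 * α + 1) (2 * l - k) * ascPoch (2 * β + 1) k


open Filter Set Topology Complex

/-- coefficient in the explicit formula for the m-th derivative -/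
noncomputable def Gc (A B : ℂ) (m k : ℕ) : ℂ :=
  (m.choose k : ℂ) * (-1) ^ k * descPoch A k * descPoch B (m - k)

/-- explicit formula for the m-th derivative of (1-t)^A (1+t)^B -/
noncomputable def G (A B : ℂ) (m : ℕ) (t : ℝ) : ℂ :=
  ∑ k ∈ range (m + 1),
    Gc A B m k * ((1 - (t : ℂ)) ^ (A - k) * (1 + (t : ℂ)) ^ (B - ((m - k : ℕ) : ℂ)))

lemma hasDerivAt_ofReal_cpow_const'' {x : ℝ} (hx : 0 < x) (d : ℂ) :
    HasDerivAt (fun y : ℝ => (y : ℂ) ^ d) (d * (x : ℂ) ^ (d - 1)) x := by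
  rcases eq_or_ne d 0 with rfl | hd
  · simpa using hasDerivAt_const x (1 : ℂ)
  · have h := hasDerivAt_ofReal_cpow_const' hx.ne' (r := d - 1)
      (by simpa [sub_eq_iff_eq_add] using hd)
    simp only [sub_add_cancel] at h
    have h2 := h.const_mul d
    simp only [mul_div_cancel₀ _ hd] at h2
    exact h2

lemma hasDerivAt_one_sub_cpow (c : ℂ) {t : ℝ} (ht : t < 1) :
    HasDerivAt (fun s : ℝ => (1 - (s : ℂ)) ^ c) (-(c * (1 - (t : ℂ)) ^ (c - 1))) t := by
  have hpos : (0 : ℝ) < 1 - t := by linarith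
  have hinner : HasDerivAt (fun s : ℝ => 1 - s) (-1 : ℝ) t := by
    simpa using (hasDerivAt_id t).const_sub 1
  have houter := hasDerivAt_ofReal_cpow_const'' hpos c
  have h := HasDerivAt.scomp (𝕜 := ℝ) t houter hinner
  have h2 : HasDerivAt (fun s : ℝ => ((1 - s : ℝ) : ℂ) ^ c)
      (-(c * ((1 - t : ℝ) : ℂ) ^ (c - 1))) t := by
    convert! h using 1
    simp [neg_smul]
  convert h2 using 2 <;> push_cast <;> ring_nf

lemma hasDerivAt_one_add_cpow (c : ℂ) {t : ℝ} (ht : -1 < t) :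
    HasDerivAt (fun s : ℝ => (1 + (s : ℂ)) ^ c) (c * (1 + (t : ℂ)) ^ (c - 1)) t := by
  have hpos : (0 : ℝ) < 1 + t := by linarith
  have hinner : HasDerivAt (fun s : ℝ => 1 + s) (1 : ℝ) t := by
    simpa using (hasDerivAt_id t).const_add 1
  have houter := hasDerivAt_ofReal_cpow_const'' hpos c
  have h := HasDerivAt.scomp (𝕜 := ℝ) t houter hinner
  have h2 : HasDerivAt (fun s : ℝ => ((1 + s : ℝ) : ℂ) ^ c)
      (c * ((1 + t : ℝ) : ℂ) ^ (c - 1)) t := by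
    convert! h using 1
    simp
  convert h2 using 2 <;> push_cast <;> ring_nf

lemma hasDerivAt_term (p q : ℂ) {t : ℝ} (ht : t ∈ Set.Ioo (-1 : ℝ) 1) :
    HasDerivAt (fun s : ℝ => (1 - (s : ℂ)) ^ p * (1 + (s : ℂ)) ^ q)
      (-(p * ((1 - (t : ℂ)) ^ (p - 1) * (1 + (t : ℂ)) ^ q)) +
        q * ((1 - (t : ℂ)) ^ p * (1 + (t : ℂ)) ^ (q - 1))) t := by
  have h := (hasDerivAt_one_sub_cpow p ht.2).mul (hasDerivAt_one_add_cpow q ht.1)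
  convert! h using 1
  ring

lemma descPoch_succ (a : ℂ) (k : ℕ) : descPoch a (k + 1) = descPoch a k * (a - k) := by
  simp [descPoch, descPochhammer_succ_right]

lemma pascal_sum (m : ℕ) (F : ℕ → ℂ) :
    ∑ j ∈ range (m + 2), ((m + 1).choose j : ℂ) * F j
      = ∑ k ∈ range (m + 1), (m.choose k : ℂ) * F (k + 1) +
        ∑ k ∈ range (m + 1), (m.choose k : ℂ) * F k := by
  rw [Finset.sum_range_succ' _ (m + 1)]
  have h1 : ∀ j ∈ range (m + 1), (((m + 1).choose (j + 1) : ℕ) : ℂ) * F (j + 1)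
      = (m.choose j : ℂ) * F (j + 1) + (m.choose (j + 1) : ℂ) * F (j + 1) := by
    intro j hj
    rw [Nat.choose_succ_succ]
    push_cast
    ring
  rw [Finset.sum_congr rfl h1, Finset.sum_add_distrib]
  have h2 : ∑ k ∈ range (m + 1), (m.choose k : ℂ) * F k
      = ∑ j ∈ range m, (m.choose (j + 1) : ℂ) * F (j + 1) + (m.choose 0 : ℂ) * F 0 := by
    rw [Finset.sum_range_succ' _ m]
  have h3 : ∑ j ∈ range (m + 1), (m.choose (j + 1) : ℂ) * F (j + 1)
      = ∑ j ∈ range m, (m.choose (j + 1) : ℂ) * F (j + 1) := by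
    rw [Finset.sum_range_succ, Nat.choose_succ_self]
    simp
  rw [h3, h2]
  simp
  ring

lemma hasDerivAt_G (A B : ℂ) (m : ℕ) {t : ℝ} (ht : t ∈ Set.Ioo (-1 : ℝ) 1) :
    HasDerivAt (fun s => G A B m s) (G A B (m + 1) t) t := by
  have hterm : ∀ k ∈ range (m + 1),
      HasDerivAt (fun s : ℝ => Gc A B m k * ((1 - (s : ℂ)) ^ (A - k) * (1 + (s : ℂ)) ^ (B - ((m - k : ℕ) : ℂ))))
        (Gc A B m k * (-((A - k) * ((1 - (t : ℂ)) ^ (A - k - 1) * (1 + (t : ℂ)) ^ (B - ((m - k : ℕ) : ℂ)))) +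
          (B - ((m - k : ℕ) : ℂ)) * ((1 - (t : ℂ)) ^ (A - k) * (1 + (t : ℂ)) ^ (B - ((m - k : ℕ) : ℂ) - 1)))) t :=
    fun k _ => (hasDerivAt_term _ _ ht).const_mul _
  have h := HasDerivAt.sum hterm
  convert! h using 1
  · ext s; rw [Finset.sum_apply]; rfl
  set F : ℕ → ℂ := fun j => (-1) ^ j * descPoch A j * descPoch B (m + 1 - j) *
    ((1 - (t : ℂ)) ^ (A - j) * (1 + (t : ℂ)) ^ (B - ((m + 1 - j : ℕ) : ℂ))) with hF
  have hL : G A B (m + 1) t = ∑ j ∈ range (m + 2), ((m + 1).choose j : ℂ) * F j := by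
    unfold G Gc
    exact Finset.sum_congr rfl fun j hj => by rw [hF]; ring
  rw [hL, pascal_sum]
  rw [← Finset.sum_add_distrib]
  refine Finset.sum_congr rfl fun k hk => ?_
  have hkm : k ≤ m := by simpa [Nat.lt_succ_iff] using hk
  have e1 : m + 1 - (k + 1) = m - k := by omega
  have e2 : m + 1 - k = (m - k) + 1 := by omega
  rw [hF]
  simp only [e1, e2, descPoch_succ]
  have c1 : A - ((k + 1 : ℕ) : ℂ) = A - k - 1 := by push_cast; ring
  have c2 : B - (((m - k) + 1 : ℕ) : ℂ) = B - ((m - k : ℕ) : ℂ) - 1 := by push_cast; ring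
  have c3 : ((m - k : ℕ) : ℂ) = (m : ℂ) - k := by
    rw [Nat.cast_sub hkm]
  rw [c1, c2]
  unfold Gc
  rw [c3]
  push_cast
  ring

lemma G_zero (A B : ℂ) (t : ℝ) :
    G A B 0 t = (1 - (t : ℂ)) ^ A * (1 + (t : ℂ)) ^ B := by
  simp [G, Gc, descPoch]

lemma iteratedDeriv_eq_G (A B : ℂ) (m : ℕ) :
    ∀ t ∈ Set.Ioo (-1 : ℝ) 1,
      iteratedDeriv m (fun s : ℝ => (1 - (s : ℂ)) ^ A * (1 + (s : ℂ)) ^ B) t = G A B m t := by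
  induction m with
  | zero => intro t ht; simp [iteratedDeriv_zero, G_zero]
  | succ m ih =>
    intro t ht
    rw [iteratedDeriv_succ]
    have hev : iteratedDeriv m (fun s : ℝ => (1 - (s : ℂ)) ^ A * (1 + (s : ℂ)) ^ B)
        =ᶠ[nhds t] fun s => G A B m s := by
      filter_upwards [isOpen_Ioo.mem_nhds ht] with s hs using ih s hs
    rw [hev.deriv_eq]
    exact (hasDerivAt_G A B m ht).deriv

lemma tendsto_ofReal_cpow_zero {p : ℂ} (hp : 0 < p.re) :
    Tendsto (fun x : ℝ => (x : ℂ) ^ p) (𝓝[>] (0 : ℝ)) (𝓝 0) := by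
  rw [tendsto_zero_iff_norm_tendsto_zero]
  have hcong : (fun x : ℝ => x ^ p.re) =ᶠ[𝓝[>] (0 : ℝ)] fun x : ℝ => ‖(x : ℂ) ^ p‖ := by
    filter_upwards [self_mem_nhdsWithin] with x (hx : 0 < x)
    rw [Complex.norm_cpow_eq_rpow_re_of_pos hx]
  have h0 : Tendsto (fun x : ℝ => x ^ p.re) (𝓝[>] (0 : ℝ)) (𝓝 0) := by
    have := (Real.continuousAt_rpow_const 0 p.re (Or.inr hp.le)).continuousWithinAt
      (s := Set.Ioi (0:ℝ))
    simpa [ContinuousWithinAt, Real.zero_rpow hp.ne'] using this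
  exact h0.congr' hcong

lemma continuousAt_ofReal_cpow_pos {a : ℝ} (ha : 0 < a) (q : ℂ) :
    ContinuousAt (fun x : ℝ => (x : ℂ) ^ q) a := by
  apply ContinuousAt.cpow
  · exact Complex.continuous_ofReal.continuousAt
  · exact continuousAt_const
  · exact Or.inl (by simpa using ha)

lemma tendsto_one_sub : Tendsto (fun t : ℝ => 1 - t) (𝓝[<] (1 : ℝ)) (𝓝[>] (0 : ℝ)) := by
  apply tendsto_nhdsWithin_of_tendsto_nhds_of_eventually_within
  · have : Tendsto (fun t : ℝ => 1 - t) (𝓝 (1 : ℝ)) (𝓝 0) :=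
      ((continuous_const.sub continuous_id).tendsto' 1 0 (by norm_num))
    exact this.mono_left nhdsWithin_le_nhds
  · filter_upwards [self_mem_nhdsWithin] with t (ht : t < 1)
    exact Set.mem_Ioi.2 (by linarith)

lemma tendsto_one_add : Tendsto (fun t : ℝ => 1 + t) (𝓝[>] (-1 : ℝ)) (𝓝[>] (0 : ℝ)) := by
  apply tendsto_nhdsWithin_of_tendsto_nhds_of_eventually_within
  · have : Tendsto (fun t : ℝ => 1 + t) (𝓝 (-1 : ℝ)) (𝓝 0) :=
      ((continuous_const.add continuous_id).tendsto' (-1) 0 (by norm_num))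
    exact this.mono_left nhdsWithin_le_nhds
  · filter_upwards [self_mem_nhdsWithin] with t (ht : -1 < t)
    exact Set.mem_Ioi.2 (by linarith)

lemma tendsto_pair_right (p1 p2 q1 q2 : ℂ) (hp : 0 < (p1 + p2).re) :
    Tendsto (fun t : ℝ =>
        ((1 - (t : ℂ)) ^ p1 * (1 + (t : ℂ)) ^ q1) * ((1 - (t : ℂ)) ^ p2 * (1 + (t : ℂ)) ^ q2))
      (𝓝[<] (1 : ℝ)) (𝓝 0) := by
  have hA : Tendsto (fun t : ℝ => (1 - (t : ℂ)) ^ (p1 + p2)) (𝓝[<] (1 : ℝ)) (𝓝 0) := by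
    have := (tendsto_ofReal_cpow_zero hp).comp tendsto_one_sub
    refine this.congr fun t => ?_
    simp [Function.comp]
  have hq : ∀ q : ℂ, Tendsto (fun t : ℝ => (1 + (t : ℂ)) ^ q) (𝓝[<] (1 : ℝ))
      (𝓝 (((2 : ℝ) : ℂ) ^ q)) := by
    intro q
    have hc : ContinuousAt (fun t : ℝ => ((1 + t : ℝ) : ℂ) ^ q) 1 :=
      (continuousAt_ofReal_cpow_pos (show (0:ℝ) < 1 + 1 by norm_num) q).comp
        ((continuous_const.add continuous_id).continuousAt)
    have h2 := (hc.continuousWithinAt (s := Set.Iio (1:ℝ))).tendsto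
    rw [show ((1:ℝ) + (1:ℝ)) = (2:ℝ) by norm_num] at h2
    refine h2.congr fun t => by push_cast; ring_nf
  have hprod := hA.mul ((hq q1).mul (hq q2))
  rw [zero_mul] at hprod
  refine hprod.congr' ?_
  filter_upwards [self_mem_nhdsWithin] with t (ht : t < 1)
  have hne : (1 : ℂ) - t ≠ 0 := by
    intro h
    have : (t : ℂ) = 1 := by linear_combination -h
    exact ht.ne (by exact_mod_cast this)
  rw [Complex.cpow_add _ _ hne]
  ring

lemma tendsto_pair_left (p1 p2 q1 q2 : ℂ) (hp : 0 < (q1 + q2).re) :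
    Tendsto (fun t : ℝ =>
        ((1 - (t : ℂ)) ^ p1 * (1 + (t : ℂ)) ^ q1) * ((1 - (t : ℂ)) ^ p2 * (1 + (t : ℂ)) ^ q2))
      (𝓝[>] (-1 : ℝ)) (𝓝 0) := by
  have hA : Tendsto (fun t : ℝ => (1 + (t : ℂ)) ^ (q1 + q2)) (𝓝[>] (-1 : ℝ)) (𝓝 0) := by
    have := (tendsto_ofReal_cpow_zero hp).comp tendsto_one_add
    refine this.congr fun t => ?_
    simp [Function.comp]
  have hq : ∀ p : ℂ, Tendsto (fun t : ℝ => (1 - (t : ℂ)) ^ p) (𝓝[>] (-1 : ℝ))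
      (𝓝 (((2 : ℝ) : ℂ) ^ p)) := by
    intro p
    have hc : ContinuousAt (fun t : ℝ => ((1 - t : ℝ) : ℂ) ^ p) (-1) :=
      (continuousAt_ofReal_cpow_pos (show (0:ℝ) < 1 - (-1) by norm_num) p).comp
        ((continuous_const.sub continuous_id).continuousAt)
    have h2 := (hc.continuousWithinAt (s := Set.Ioi (-1:ℝ))).tendsto
    rw [show ((1:ℝ) - (-1:ℝ)) = (2:ℝ) by norm_num] at h2
    refine h2.congr fun t => by push_cast; ring_nf
  have hprod := hA.mul ((hq p1).mul (hq p2))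
  rw [zero_mul] at hprod
  refine hprod.congr' ?_
  filter_upwards [self_mem_nhdsWithin] with t (ht : -1 < t)
  have hne : (1 : ℂ) + t ≠ 0 := by
    intro h
    have : (t : ℂ) = -1 := by linear_combination h
    exact ht.ne' (by exact_mod_cast this)
  rw [Complex.cpow_add _ _ hne]
  ring

/-- combined product term -/
noncomputable def Hterm (A B : ℂ) (m n k k' : ℕ) (t : ℝ) : ℂ :=
  (1 - (t : ℂ)) ^ (A - k + (A - k')) *
    (1 + (t : ℂ)) ^ (B - ((m - k : ℕ) : ℂ) + (B - ((n - k' : ℕ) : ℂ)))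

lemma GG_eq (A B : ℂ) (m n : ℕ) {t : ℝ} (ht : t ∈ Set.Ioo (-1 : ℝ) 1) :
    G A B m t * G A B n t = ∑ k ∈ range (m + 1), ∑ k' ∈ range (n + 1),
      (Gc A B m k * Gc A B n k') * Hterm A B m n k k' t := by
  have h1 : (1 : ℂ) - t ≠ 0 := by
    intro h
    have : (t : ℂ) = 1 := by linear_combination -h
    exact ht.2.ne (by exact_mod_cast this)
  have h2 : (1 : ℂ) + t ≠ 0 := by
    intro h
    have : (t : ℂ) = -1 := by linear_combination h
    exact ht.1.ne' (by exact_mod_cast this)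
  rw [G, G, Finset.sum_mul_sum]
  refine Finset.sum_congr rfl fun k _ => Finset.sum_congr rfl fun k' _ => ?_
  rw [Hterm, Complex.cpow_add _ _ h1, Complex.cpow_add _ _ h2]
  ring

lemma tendsto_GG_right (A B : ℂ) (m n : ℕ) (h : (m : ℝ) + n < 2 * A.re) :
    Tendsto (fun t : ℝ => G A B m t * G A B n t) (𝓝[<] (1 : ℝ)) (𝓝 0) := by
  have hcong : (fun t : ℝ => G A B m t * G A B n t) =ᶠ[𝓝[<] (1 : ℝ)]
      fun t => ∑ k ∈ range (m + 1), ∑ k' ∈ range (n + 1),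
        (Gc A B m k * Gc A B n k') *
          (((1 - (t : ℂ)) ^ (A - k) * (1 + (t : ℂ)) ^ (B - ((m - k : ℕ) : ℂ))) *
            ((1 - (t : ℂ)) ^ (A - k') * (1 + (t : ℂ)) ^ (B - ((n - k' : ℕ) : ℂ)))) := by
    apply Filter.Eventually.of_forall
    intro t
    unfold G
    beta_reduce
    rw [Finset.sum_mul_sum]
    exact Finset.sum_congr rfl fun k _ => Finset.sum_congr rfl fun k' _ => by ring
  rw [Filter.tendsto_congr' hcong]
  have key : Tendsto (fun t : ℝ => ∑ k ∈ range (m + 1), ∑ k' ∈ range (n + 1),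
      (Gc A B m k * Gc A B n k') *
        (((1 - (t : ℂ)) ^ (A - k) * (1 + (t : ℂ)) ^ (B - ((m - k : ℕ) : ℂ))) *
          ((1 - (t : ℂ)) ^ (A - k') * (1 + (t : ℂ)) ^ (B - ((n - k' : ℕ) : ℂ)))))
      (𝓝[<] (1 : ℝ)) (𝓝 (∑ _k ∈ range (m + 1), ∑ _k' ∈ range (n + 1), (0 : ℂ))) := by
    refine tendsto_finset_sum _ fun k hk => ?_
    refine tendsto_finset_sum _ fun k' hk' => ?_
    have hkm : (k : ℝ) ≤ m := by exact_mod_cast Nat.cast_le.2 (Nat.lt_succ_iff.1 (mem_range.1 hk))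
    have hkn : (k' : ℝ) ≤ n := by exact_mod_cast Nat.cast_le.2 (Nat.lt_succ_iff.1 (mem_range.1 hk'))
    have hre : 0 < (A - k + (A - k')).re := by
      simp only [Complex.add_re, Complex.sub_re, Complex.natCast_re]
      linarith
    have := (tendsto_pair_right (A - k) (A - k') (B - ((m - k : ℕ) : ℂ)) (B - ((n - k' : ℕ) : ℂ))
      hre).const_mul (Gc A B m k * Gc A B n k')
    simpa using this

  simpa using key
lemma tendsto_GG_left (A B : ℂ) (m n : ℕ) (h : (m : ℝ) + n < 2 * B.re) :
    Tendsto (fun t : ℝ => G A B m t * G A B n t) (𝓝[>] (-1 : ℝ)) (𝓝 0) := by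
  have hcong : (fun t : ℝ => G A B m t * G A B n t) =ᶠ[𝓝[>] (-1 : ℝ)]
      fun t => ∑ k ∈ range (m + 1), ∑ k' ∈ range (n + 1),
        (Gc A B m k * Gc A B n k') *
          (((1 - (t : ℂ)) ^ (A - k) * (1 + (t : ℂ)) ^ (B - ((m - k : ℕ) : ℂ))) *
            ((1 - (t : ℂ)) ^ (A - k') * (1 + (t : ℂ)) ^ (B - ((n - k' : ℕ) : ℂ)))) := by
    apply Filter.Eventually.of_forall
    intro t
    unfold G
    beta_reduce
    rw [Finset.sum_mul_sum]
    exact Finset.sum_congr rfl fun k _ => Finset.sum_congr rfl fun k' _ => by ring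
  rw [Filter.tendsto_congr' hcong]
  have key : Tendsto (fun t : ℝ => ∑ k ∈ range (m + 1), ∑ k' ∈ range (n + 1),
      (Gc A B m k * Gc A B n k') *
        (((1 - (t : ℂ)) ^ (A - k) * (1 + (t : ℂ)) ^ (B - ((m - k : ℕ) : ℂ))) *
          ((1 - (t : ℂ)) ^ (A - k') * (1 + (t : ℂ)) ^ (B - ((n - k' : ℕ) : ℂ)))))
      (𝓝[>] (-1 : ℝ)) (𝓝 (∑ _k ∈ range (m + 1), ∑ _k' ∈ range (n + 1), (0 : ℂ))) := by
    refine tendsto_finset_sum _ fun k hk => ?_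
    refine tendsto_finset_sum _ fun k' hk' => ?_
    have hkm : ((m - k : ℕ) : ℝ) ≤ m := by exact_mod_cast Nat.cast_le.2 (Nat.sub_le m k)
    have hkn : ((n - k' : ℕ) : ℝ) ≤ n := by exact_mod_cast Nat.cast_le.2 (Nat.sub_le n k')
    have hre : 0 < (B - ((m - k : ℕ) : ℂ) + (B - ((n - k' : ℕ) : ℂ))).re := by
      simp only [Complex.add_re, Complex.sub_re, Complex.natCast_re]
      linarith
    have := (tendsto_pair_left (A - k) (A - k') (B - ((m - k : ℕ) : ℂ)) (B - ((n - k' : ℕ) : ℂ))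
      hre).const_mul (Gc A B m k * Gc A B n k')
    simpa using this
  simpa using key

lemma point_eq (p q : ℂ) {t : ℝ} (h1 : -1 ≤ t) (h2 : t ≤ 1) :
    (1 - (t : ℂ)) ^ p * (1 + (t : ℂ)) ^ q
      = ((2 : ℝ) : ℂ) ^ p * ((2 : ℝ) : ℂ) ^ q *
        (((((t + 1) * 2⁻¹ : ℝ)) : ℂ) ^ q * (1 - ((((t + 1) * 2⁻¹ : ℝ)) : ℂ)) ^ p) := by
  have e1 : (1 : ℂ) - t = ((2 : ℝ) : ℂ) * (((1 - t) * 2⁻¹ : ℝ) : ℂ) := by push_cast; ring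
  have e2 : (1 : ℂ) + t = ((2 : ℝ) : ℂ) * (((t + 1) * 2⁻¹ : ℝ) : ℂ) := by push_cast; ring
  have e3 : (1 : ℂ) - ((((t + 1) * 2⁻¹ : ℝ)) : ℂ) = (((1 - t) * 2⁻¹ : ℝ) : ℂ) := by
    push_cast; ring
  rw [e1, e2, e3,
    Complex.mul_cpow_ofReal_nonneg (by norm_num) (by nlinarith) p,
    Complex.mul_cpow_ofReal_nonneg (by norm_num) (by nlinarith) q]
  ring

lemma II_base (p q : ℂ) (hp : -1 < p.re) (hq : -1 < q.re) :
    IntervalIntegrable (fun t : ℝ => (1 - (t : ℂ)) ^ p * (1 + (t : ℂ)) ^ q)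
      volume (-1) 1 := by
  have hu : 0 < (q + 1).re := by simp [Complex.add_re]; linarith
  have hv : 0 < (p + 1).re := by simp [Complex.add_re]; linarith
  have h0 := Complex.betaIntegral_convergent hu hv
  simp only [add_sub_cancel_right] at h0
  have h1 := h0.comp_mul_right (c := (2⁻¹ : ℝ)) (h := enorm_ne_top) (h' := enorm_ne_top)
  have h2 := h1.comp_add_right 1
  have h2' : IntervalIntegrable
      (fun x : ℝ => ((((x + 1) * 2⁻¹ : ℝ)) : ℂ) ^ q * (1 - ((((x + 1) * 2⁻¹ : ℝ)) : ℂ)) ^ p)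
      volume (-1) 1 := by
    norm_num at h2
    have hfun : (fun x : ℝ => ((((x + 1) * 2⁻¹ : ℝ)) : ℂ) ^ q * (1 - ((((x + 1) * 2⁻¹ : ℝ)) : ℂ)) ^ p)
        = fun x : ℝ => (((x : ℂ) + 1) * (1 / 2)) ^ q * (1 - ((x : ℂ) + 1) * (1 / 2)) ^ p := by
      funext x; norm_num
    rw [hfun]
    exact h2
  have h3 := h2'.const_mul (((2 : ℝ) : ℂ) ^ p * ((2 : ℝ) : ℂ) ^ q)
  rw [intervalIntegrable_iff] at h3 ⊢
  apply h3.congr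
  rw [Set.uIoc_of_le (by norm_num : (-1 : ℝ) ≤ 1)]
  refine ((ae_restrict_iff' measurableSet_Ioc).2 (Filter.Eventually.of_forall fun t ht => ?_)).symm.symm
  exact (point_eq p q ht.1.le ht.2).symm

lemma integral_base (p q : ℂ) (hp : -1 < p.re) (hq : -1 < q.re) :
    ∫ t in (-1 : ℝ)..1, (1 - (t : ℂ)) ^ p * (1 + (t : ℂ)) ^ q
      = ((2 : ℝ) : ℂ) ^ p * ((2 : ℝ) : ℂ) ^ q * 2 * betaFn (p + 1) (q + 1) := by
  have hu : 0 < (q + 1).re := by simp [Complex.add_re]; linarith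
  have hv : 0 < (p + 1).re := by simp [Complex.add_re]; linarith
  have hsub := intervalIntegral.integral_comp_mul_add (a := (0:ℝ)) (b := 1) (c := 2)
    (f := fun t : ℝ => (1 - (t : ℂ)) ^ p * (1 + (t : ℂ)) ^ q) (by norm_num) (-1)
  norm_num at hsub
  -- hsub : ∫ x in 0..1, f (2x - 1) = 2⁻¹ • ∫ t in -1..1, f t
  have hpt : ∀ x ∈ Set.uIcc (0:ℝ) 1,
      ((1 : ℂ) - (2 * (x:ℂ) + -1)) ^ p * (2 * (x:ℂ)) ^ q
        = (((2 : ℝ) : ℂ) ^ p * ((2 : ℝ) : ℂ) ^ q) *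
          ((x : ℂ) ^ q * (1 - (x : ℂ)) ^ p) := by
    intro x hx
    rw [Set.uIcc_of_le (by norm_num : (0:ℝ) ≤ 1)] at hx
    have e1 : (1 : ℂ) - (2 * (x:ℂ) + -1) = ((2 : ℝ) : ℂ) * (((1 - x : ℝ)) : ℂ) := by
      push_cast; ring
    have e2 : 2 * (x:ℂ) = ((2 : ℝ) : ℂ) * ((x : ℝ) : ℂ) := by push_cast; ring
    rw [e1, e2, Complex.mul_cpow_ofReal_nonneg (by norm_num) (by linarith [hx.2]) p,
      Complex.mul_cpow_ofReal_nonneg (by norm_num) hx.1 q]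
    have : ((1 - x : ℝ) : ℂ) = 1 - (x : ℂ) := by push_cast; ring
    rw [this]; ring
  rw [intervalIntegral.integral_congr hpt, intervalIntegral.integral_const_mul] at hsub
  have hbeta := Complex.Gamma_mul_Gamma_eq_betaIntegral hu hv
  rw [Complex.betaIntegral] at hbeta
  simp only [add_sub_cancel_right] at hbeta
  -- hbeta : Γ(q+1) * Γ(p+1) = Γ(q+1+(p+1)) * ∫ x in 0..1, x^q (1-x)^p
  have hGne : Complex.Gamma (q + 1 + (p + 1)) ≠ 0 :=
    Complex.Gamma_ne_zero_of_re_pos (by simp [Complex.add_re]; linarith)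
  have hint : ∫ x in (0:ℝ)..1, (x : ℂ) ^ q * (1 - (x : ℂ)) ^ p
      = Complex.Gamma (q + 1) * Complex.Gamma (p + 1) / Complex.Gamma (q + 1 + (p + 1)) := by
    rw [hbeta]; field_simp
  rw [hint] at hsub
  have : (∫ t in (-1:ℝ)..1, (1 - (t : ℂ)) ^ p * (1 + (t : ℂ)) ^ q)
      = 2 * (((2:ℝ):ℂ) ^ p * ((2:ℝ):ℂ) ^ q *
        (Complex.Gamma (q + 1) * Complex.Gamma (p + 1) / Complex.Gamma (q + 1 + (p + 1)))) := by
    linear_combination (-2 : ℂ) * hsub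
  rw [this, betaFn]
  rw [show q + 1 + (p + 1) = p + 1 + (q + 1) by ring]
  ring

lemma ascPoch_succ (a : ℂ) (k : ℕ) : ascPoch a (k + 1) = ascPoch a k * (a + k) := by
  simp [ascPoch, ascPochhammer_succ_right]

lemma Gamma_add_nat {z : ℂ} (hz : 0 < z.re) (n : ℕ) :
    Complex.Gamma (z + n) = ascPoch z n * Complex.Gamma z := by
  induction n with
  | zero => simp [ascPoch]
  | succ n ih =>
    have hne : z + n ≠ 0 := by
      intro h
      have := congrArg Complex.re h
      simp [Complex.add_re] at this
      have : (0:ℝ) ≤ (n:ℝ) := Nat.cast_nonneg n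
      linarith [congrArg Complex.re h, Complex.zero_re]
    have e : z + ((n : ℂ) + 1) = (z + n) + 1 := by ring
    rw [show ((n + 1 : ℕ) : ℂ) = (n : ℂ) + 1 by push_cast; ring, e,
      Complex.Gamma_add_one _ hne, ih, ascPoch_succ]
    ring

lemma ascPoch_ne_zero {z : ℂ} (hz : 0 < z.re) (n : ℕ) : ascPoch z n ≠ 0 := by
  induction n with
  | zero => simp [ascPoch]
  | succ n ih =>
    rw [ascPoch_succ]
    refine mul_ne_zero ih ?_
    intro h
    have := congrArg Complex.re h
    simp [Complex.add_re] at this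
    have h0 : (0:ℝ) ≤ (n:ℝ) := Nat.cast_nonneg n
    linarith

lemma betaFn_shift {x y : ℂ} (hx : 0 < x.re) (hy : 0 < y.re) (a b : ℕ) :
    betaFn (x + a) (y + b) =
      betaFn x y * ascPoch x a * ascPoch y b / ascPoch (x + y) (a + b) := by
  have hxy : 0 < (x + y).re := by simp [Complex.add_re]; linarith
  have h1 : Complex.Gamma (x + a) = ascPoch x a * Complex.Gamma x := Gamma_add_nat hx a
  have h2 : Complex.Gamma (y + b) = ascPoch y b * Complex.Gamma y := Gamma_add_nat hy b
  have h3 : Complex.Gamma (x + a + (y + b)) = ascPoch (x + y) (a + b) * Complex.Gamma (x + y) := by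
    rw [show x + a + (y + b) = (x + y) + ((a + b : ℕ) : ℂ) by push_cast; ring]
    exact Gamma_add_nat hxy (a + b)
  rw [betaFn, betaFn, h1, h2, h3]
  have hG := Complex.Gamma_ne_zero_of_re_pos hxy
  have hP := ascPoch_ne_zero hxy (a + b)
  field_simp

lemma ae_ne_one : ∀ᵐ t : ℝ ∂volume, t ≠ 1 := by
  rw [MeasureTheory.ae_iff]
  have : {t : ℝ | ¬ t ≠ 1} = {1} := by ext t; simp
  rw [this]
  exact Real.volume_singleton

section main
variable {l : ℕ} {α β : ℂ} (hα : α.re > -1/2) (hβ : β.re > -1/2)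

lemma GG_ae_eq (m n : ℕ) :
    (fun t : ℝ => G ((l:ℂ) + α) ((l:ℂ) + β) m t * G ((l:ℂ) + α) ((l:ℂ) + β) n t)
      =ᵐ[volume.restrict (Set.uIoc (-1 : ℝ) 1)]
    fun t => ∑ k ∈ range (m + 1), ∑ k' ∈ range (n + 1),
      (Gc ((l:ℂ) + α) ((l:ℂ) + β) m k * Gc ((l:ℂ) + α) ((l:ℂ) + β) n k') *
        Hterm ((l:ℂ) + α) ((l:ℂ) + β) m n k k' t := by
  have h1 : ∀ᵐ t : ℝ ∂(volume.restrict (Set.uIoc (-1 : ℝ) 1)), t ≠ 1 :=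
    ae_restrict_of_ae ae_ne_one
  have h2 : ∀ᵐ t : ℝ ∂(volume.restrict (Set.uIoc (-1 : ℝ) 1)), t ∈ Set.uIoc (-1 : ℝ) 1 :=
    ae_restrict_mem measurableSet_uIoc
  filter_upwards [h1, h2] with t ht hmem
  rw [Set.uIoc_of_le (by norm_num : (-1:ℝ) ≤ 1)] at hmem
  exact GG_eq _ _ m n ⟨hmem.1, lt_of_le_of_ne hmem.2 ht⟩

include hα hβ in
lemma Hterm_integrable {m n k k' : ℕ} (hk : k ≤ m) (hk' : k' ≤ n) (hmn : m + n ≤ 2 * l) :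
    IntervalIntegrable (fun t => Hterm ((l:ℂ) + α) ((l:ℂ) + β) m n k k' t) volume (-1) 1 := by
  have hkk : (k : ℝ) + k' ≤ 2 * l := by
    have : k + k' ≤ 2 * l := by omega
    exact_mod_cast Nat.cast_le.2 this
  have hmm : ((m - k : ℕ) : ℝ) + ((n - k' : ℕ) : ℝ) ≤ 2 * l := by
    have : (m - k) + (n - k') ≤ 2 * l := by omega
    exact_mod_cast Nat.cast_le.2 this
  apply II_base
  · simp only [Complex.add_re, Complex.sub_re, Complex.natCast_re]
    linarith
  · simp only [Complex.add_re, Complex.sub_re, Complex.natCast_re]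
    linarith

include hα hβ in
lemma GG_integrable {m n : ℕ} (hmn : m + n ≤ 2 * l) :
    IntervalIntegrable
      (fun t : ℝ => G ((l:ℂ) + α) ((l:ℂ) + β) m t * G ((l:ℂ) + α) ((l:ℂ) + β) n t)
      volume (-1) 1 := by
  have hsum : IntervalIntegrable
      (fun t => ∑ k ∈ range (m + 1), ∑ k' ∈ range (n + 1),
        (Gc ((l:ℂ) + α) ((l:ℂ) + β) m k * Gc ((l:ℂ) + α) ((l:ℂ) + β) n k') *
          Hterm ((l:ℂ) + α) ((l:ℂ) + β) m n k k' t) volume (-1) 1 := by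
    rw [intervalIntegrable_iff]
    apply MeasureTheory.integrable_finset_sum
    intro k hk
    apply MeasureTheory.integrable_finset_sum
    intro k' hk'
    have := (Hterm_integrable hα hβ (Nat.lt_succ_iff.1 (mem_range.1 hk))
      (Nat.lt_succ_iff.1 (mem_range.1 hk')) hmn).const_mul
      (Gc ((l:ℂ) + α) ((l:ℂ) + β) m k * Gc ((l:ℂ) + α) ((l:ℂ) + β) n k')
    rw [intervalIntegrable_iff] at this
    exact this
  exact hsum.congr_ae (GG_ae_eq m n).symm

include hα hβ in
lemma parts_step {j : ℕ} (hj : j < l) :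
    (∫ t in (-1:ℝ)..1, G ((l:ℂ) + α) ((l:ℂ) + β) (l - j) t * G ((l:ℂ) + α) ((l:ℂ) + β) (l + j) t)
      = - ∫ t in (-1:ℝ)..1,
          G ((l:ℂ) + α) ((l:ℂ) + β) (l - (j+1)) t * G ((l:ℂ) + α) ((l:ℂ) + β) (l + (j+1)) t := by
  set A := (l:ℂ) + α with hA
  set B := (l:ℂ) + β with hB
  set m := l - (j + 1) with hm
  have hm1 : m + 1 = l - j := by omega
  have hmr : (m : ℝ) = (l : ℝ) - j - 1 := by
    rw [hm]; push_cast [Nat.cast_sub (by omega : j + 1 ≤ l)]; ring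
  have hAre : A.re = (l : ℝ) + α.re := by rw [hA]; simp [Complex.add_re]
  have hBre : B.re = (l : ℝ) + β.re := by rw [hB]; simp [Complex.add_re]
  have hderiv : ∀ t ∈ Set.Ioo (-1:ℝ) 1, HasDerivAt (fun s => G A B m s * G A B (l+j) s)
      (G A B (m+1) t * G A B (l+j) t + G A B m t * G A B (l+j+1) t) t :=
    fun t ht => (hasDerivAt_G A B m ht).mul (hasDerivAt_G A B (l+j) ht)
  have hi1 : IntervalIntegrable (fun t => G A B (m+1) t * G A B (l+j) t) volume (-1) 1 :=
    GG_integrable hα hβ (by omega)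
  have hi2 : IntervalIntegrable (fun t => G A B m t * G A B (l+j+1) t) volume (-1) 1 :=
    GG_integrable hα hβ (by omega)
  have htr : Tendsto (fun t => G A B m t * G A B (l+j) t) (𝓝[<] (1:ℝ)) (𝓝 0) := by
    apply tendsto_GG_right
    rw [hAre]
    push_cast
    rw [hmr]
    linarith
  have htl : Tendsto (fun t => G A B m t * G A B (l+j) t) (𝓝[>] (-1:ℝ)) (𝓝 0) := by
    apply tendsto_GG_left
    rw [hBre]
    push_cast
    rw [hmr]
    linarith
  have h0 := intervalIntegral.integral_eq_sub_of_hasDerivAt_of_tendsto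
    (by norm_num : (-1:ℝ) < 1) hderiv (hi1.add hi2) htl htr
  rw [intervalIntegral.integral_add hi1 hi2, sub_zero] at h0
  have e1 : l + j + 1 = l + (j + 1) := by omega
  rw [hm1, e1] at h0
  linear_combination h0

include hα hβ in
lemma parts_all : ∀ j, j ≤ l →
    (∫ t in (-1:ℝ)..1, G ((l:ℂ) + α) ((l:ℂ) + β) l t * G ((l:ℂ) + α) ((l:ℂ) + β) l t)
      = (-1)^j * ∫ t in (-1:ℝ)..1,
          G ((l:ℂ) + α) ((l:ℂ) + β) (l - j) t * G ((l:ℂ) + α) ((l:ℂ) + β) (l + j) t := by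
  intro j
  induction j with
  | zero => intro _; simp
  | succ j ih =>
    intro hj
    rw [ih (by omega), parts_step hα hβ (by omega)]
    ring

lemma integrand_eq {l : ℕ} {α β : ℂ} {t : ℝ} (ht : t ∈ Set.Ioo (-1:ℝ) 1) :
    (jacobiP l α β t) ^ 2 * (1 - (t : ℂ)) ^ (2 * α) * (1 + (t : ℂ)) ^ (2 * β)
      = ((-1 : ℂ) ^ l / (2 ^ l * (l.factorial : ℂ))) ^ 2 *
        (G ((l:ℂ) + α) ((l:ℂ) + β) l t * G ((l:ℂ) + α) ((l:ℂ) + β) l t) := by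
  have h1 : (1 : ℂ) - t ≠ 0 := by
    intro h
    have : (t : ℂ) = 1 := by linear_combination -h
    exact ht.2.ne (by exact_mod_cast this)
  have h2 : (1 : ℂ) + t ≠ 0 := by
    intro h
    have : (t : ℂ) = -1 := by linear_combination h
    exact ht.1.ne' (by exact_mod_cast this)
  have hu : (1 - (t:ℂ))^(-α) * (1 - (t:ℂ))^(-α) * (1 - (t:ℂ))^(2*α) = 1 := by
    rw [← Complex.cpow_add _ _ h1, ← Complex.cpow_add _ _ h1,
      show -α + -α + 2*α = 0 by ring, Complex.cpow_zero]
  have hv : (1 + (t:ℂ))^(-β) * (1 + (t:ℂ))^(-β) * (1 + (t:ℂ))^(2*β) = 1 := by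
    rw [← Complex.cpow_add _ _ h2, ← Complex.cpow_add _ _ h2,
      show -β + -β + 2*β = 0 by ring, Complex.cpow_zero]
  rw [jacobiP, iteratedDeriv_eq_G ((l:ℂ) + α) ((l:ℂ) + β) l t ht]
  set c := ((-1 : ℂ) ^ l / (2 ^ l * (l.factorial : ℂ)))
  set u := (1 - (t:ℂ))^(-α)
  set v := (1 + (t:ℂ))^(-β)
  set x := (1 - (t:ℂ))^(2*α)
  set y := (1 + (t:ℂ))^(2*β)
  set g := G ((l:ℂ) + α) ((l:ℂ) + β) l t
  linear_combination (c^2*g^2*v*v*y)*hu + (c^2*g^2)*hv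

lemma two_cpow_add (x y : ℂ) : (2:ℂ)^(x+y) = (2:ℂ)^x * (2:ℂ)^y :=
  Complex.cpow_add _ _ two_ne_zero

lemma GG_ae_eq' (l : ℕ) (α β : ℂ) (m n : ℕ) :
    ∀ᵐ t : ℝ ∂volume, t ∈ Set.uIoc (-1 : ℝ) 1 →
      G ((l:ℂ) + α) ((l:ℂ) + β) m t * G ((l:ℂ) + α) ((l:ℂ) + β) n t
        = ∑ k ∈ range (m + 1), ∑ k' ∈ range (n + 1),
            (Gc ((l:ℂ) + α) ((l:ℂ) + β) m k * Gc ((l:ℂ) + α) ((l:ℂ) + β) n k') *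
              Hterm ((l:ℂ) + α) ((l:ℂ) + β) m n k k' t := by
  filter_upwards [ae_ne_one] with t ht hmem
  rw [Set.uIoc_of_le (by norm_num : (-1:ℝ) ≤ 1)] at hmem
  exact GG_eq _ _ m n ⟨hmem.1, lt_of_le_of_ne hmem.2 ht⟩

include hα hβ in
lemma int_G0G2l :
    ∫ t in (-1:ℝ)..1, G ((l:ℂ)+α) ((l:ℂ)+β) 0 t * G ((l:ℂ)+α) ((l:ℂ)+β) (2*l) t
      = (2:ℂ)^(2*α+2*β+1) * (2:ℂ)^(2*l) * betaFn (2*α+1) (2*β+1) / ascPoch (2*α+2*β+2) (2*l)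
        * ∑ k ∈ range (2*l+1), ((-1:ℂ)^k * ((2*l).choose k : ℂ) * descPoch ((l:ℂ)+α) k *
            descPoch ((l:ℂ)+β) (2*l-k) * ascPoch (2*α+1) (2*l-k) * ascPoch (2*β+1) k) := by
  rw [intervalIntegral.integral_congr_ae (GG_ae_eq' l α β 0 (2*l))]
  rw [intervalIntegral.integral_finset_sum]
  swap
  · intro k hk
    rw [intervalIntegrable_iff]
    apply MeasureTheory.integrable_finset_sum
    intro k' hk'
    have := (Hterm_integrable (l := l) (m := 0) (n := 2*l) hα hβ
      (Nat.lt_succ_iff.1 (mem_range.1 hk))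
      (Nat.lt_succ_iff.1 (mem_range.1 hk')) (by omega)).const_mul
      (Gc ((l:ℂ) + α) ((l:ℂ) + β) 0 k * Gc ((l:ℂ) + α) ((l:ℂ) + β) (2*l) k')
    rwa [intervalIntegrable_iff] at this
  rw [Finset.sum_range_one]
  rw [intervalIntegral.integral_finset_sum]
  swap
  · intro k' hk'
    exact (Hterm_integrable (l := l) (m := 0) (n := 2*l) hα hβ (le_refl 0)
      (Nat.lt_succ_iff.1 (mem_range.1 hk')) (by omega)).const_mul _
  rw [Finset.mul_sum]
  refine Finset.sum_congr rfl fun k hk => ?_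
  have hk2l : k ≤ 2*l := Nat.lt_succ_iff.1 (mem_range.1 hk)
  rw [intervalIntegral.integral_const_mul]
  set A := (l:ℂ) + α with hA
  set B := (l:ℂ) + β with hB
  set P := A - ((0:ℕ):ℂ) + (A - (k:ℂ)) with hPdef
  set Q := B - (((0-0 : ℕ)):ℂ) + (B - (((2*l - k : ℕ)):ℂ)) with hQdef
  have hcast : ((2*l - k : ℕ) : ℂ) = 2*(l:ℂ) - k := by
    push_cast [Nat.cast_sub hk2l]; ring
  have hP : -1 < P.re := by
    rw [hPdef, hA]
    simp only [Complex.add_re, Complex.sub_re, Complex.natCast_re, Complex.ofReal_re]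
    have : (k:ℝ) ≤ 2*l := by exact_mod_cast Nat.cast_le.2 hk2l
    push_cast
    linarith
  have hQ : -1 < Q.re := by
    rw [hQdef, hB, hcast]
    simp only [Complex.add_re, Complex.sub_re, Complex.natCast_re, Complex.mul_re,
      Complex.re_ofNat, Complex.im_ofNat, Complex.natCast_im, Nat.sub_self, Nat.cast_zero,
      Complex.zero_re]
    have : (k:ℝ) ≥ 0 := Nat.cast_nonneg k
    ring_nf
    linarith
  have hval : (∫ t in (-1:ℝ)..1, Hterm A B 0 (2*l) 0 k t)
      = ((2:ℝ):ℂ)^P * ((2:ℝ):ℂ)^Q * 2 * betaFn (P+1) (Q+1) := by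
    rw [show (fun t : ℝ => Hterm A B 0 (2*l) 0 k t)
        = fun t : ℝ => (1 - (t:ℂ))^P * (1 + (t:ℂ))^Q from rfl]
    exact integral_base P Q hP hQ
  rw [hval]
  -- now rewrite the beta function and powers
  have hα1 : 0 < (2*α+1).re := by
    simp only [Complex.add_re, Complex.mul_re, Complex.re_ofNat, Complex.im_ofNat,
      Complex.one_re, zero_mul, sub_zero]
    linarith
  have hβ1 : 0 < (2*β+1).re := by
    simp only [Complex.add_re, Complex.mul_re, Complex.re_ofNat, Complex.im_ofNat,
      Complex.one_re, zero_mul, sub_zero]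
    linarith
  have hP1 : P + 1 = 2*α + 1 + ((2*l - k : ℕ):ℂ) := by
    rw [hPdef, hA, hcast]; push_cast; ring
  have hQ1 : Q + 1 = 2*β + 1 + ((k:ℕ):ℂ) := by
    rw [hQdef, hB, hcast]; push_cast; ring
  have hbeta : betaFn (P+1) (Q+1)
      = betaFn (2*α+1) (2*β+1) * ascPoch (2*α+1) (2*l-k) * ascPoch (2*β+1) k /
          ascPoch (2*α+2*β+2) (2*l) := by
    rw [hP1, hQ1, betaFn_shift hα1 hβ1 (2*l-k) k,
      show (2*α+1+(2*β+1)) = 2*α+2*β+2 from by ring,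
      show 2*l-k+k = 2*l from by omega]
  have hpow : ((2:ℝ):ℂ)^P * ((2:ℝ):ℂ)^Q * 2 = (2:ℂ)^(2*α+2*β+1) * (2:ℂ)^(2*l) := by
    have hc2 : ((2:ℝ):ℂ) = (2:ℂ) := by norm_num
    have hPQ1 : P + Q + 1 = (2*α+2*β+1) + ((2*l:ℕ):ℂ) := by
      rw [hPdef, hQdef, hA, hB, hcast]; push_cast; ring
    calc ((2:ℝ):ℂ)^P * ((2:ℝ):ℂ)^Q * 2
        = (2:ℂ)^P * (2:ℂ)^Q * (2:ℂ)^(1:ℂ) := by rw [hc2, Complex.cpow_one]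
      _ = (2:ℂ)^(P + Q + 1) := by rw [← two_cpow_add, ← two_cpow_add]
      _ = (2:ℂ)^(2*α+2*β+1) * (2:ℂ)^((2*l:ℕ):ℂ) := by rw [hPQ1, two_cpow_add]
      _ = (2:ℂ)^(2*α+2*β+1) * (2:ℂ)^(2*l) := by rw [Complex.cpow_natCast]
  rw [hbeta, hpow]
  have hGc0 : Gc A B 0 0 = 1 := by simp [Gc, descPoch]
  have hGck : Gc A B (2*l) k = ((2*l).choose k : ℂ) * (-1)^k * descPoch A k * descPoch B (2*l-k) := rfl
  rw [hGc0, hGck]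
  ring

include hα hβ in
lemma W_eq :
    W l α β = (-1:ℂ)^l * ∑ k ∈ range (2*l+1),
      ((-1:ℂ)^k * ((2*l).choose k : ℂ) * descPoch ((l:ℂ)+α) k *
        descPoch ((l:ℂ)+β) (2*l-k) * ascPoch (2*α+1) (2*l-k) * ascPoch (2*β+1) k) := by
  rw [W, Finset.mul_sum]
  refine Finset.sum_congr rfl fun k hk => ?_
  have hd : descPoch (2*(l:ℂ)) k = ((k.factorial * (2*l).choose k : ℕ) : ℂ) := by
    rw [show (2*(l:ℂ)) = ((2*l:ℕ):ℂ) from by push_cast; ring, descPoch,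
      descPochhammer_eval_eq_descFactorial ℂ (2*l) k, Nat.descFactorial_eq_factorial_mul_choose]
  rw [hd, show α + (l:ℂ) = (l:ℂ) + α from add_comm _ _,
    show β + (l:ℂ) = (l:ℂ) + β from add_comm _ _]
  have hkfac : (k.factorial : ℂ) ≠ 0 := Nat.cast_ne_zero.2 k.factorial_ne_zero
  push_cast
  field_simp
  ring

include hα hβ in
theorem stmt1' :
    ∫ t in (-1 : ℝ)..1, (jacobiP l α β t) ^ 2 * (1 - (t : ℂ)) ^ (2 * α) * (1 + (t : ℂ)) ^ (2 * β)
      = (2 : ℂ) ^ (2 * α + 2 * β + 1) / ((l.factorial : ℂ)) ^ 2 *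
        betaFn (2 * α + 1) (2 * β + 1) * (W l α β / ascPoch (2 * α + 2 * β + 2) (2 * l)) := by
  have hstep1 : (∫ t in (-1 : ℝ)..1,
      (jacobiP l α β t) ^ 2 * (1 - (t : ℂ)) ^ (2 * α) * (1 + (t : ℂ)) ^ (2 * β))
      = ((-1 : ℂ) ^ l / (2 ^ l * (l.factorial : ℂ))) ^ 2 *
        ∫ t in (-1 : ℝ)..1, G ((l:ℂ)+α) ((l:ℂ)+β) l t * G ((l:ℂ)+α) ((l:ℂ)+β) l t := by
    rw [← intervalIntegral.integral_const_mul]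
    apply intervalIntegral.integral_congr_ae
    filter_upwards [ae_ne_one] with t ht hmem
    rw [Set.uIoc_of_le (by norm_num : (-1:ℝ) ≤ 1)] at hmem
    exact integrand_eq ⟨hmem.1, lt_of_le_of_ne hmem.2 ht⟩
  have hc : ((-1 : ℂ) ^ l / (2 ^ l * (l.factorial : ℂ))) ^ 2
      = 1 / ((2:ℂ)^(2*l) * (l.factorial:ℂ)^2) := by
    rw [div_pow, mul_pow]
    congr 1
    · rw [← pow_mul, mul_comm l 2, pow_mul]; norm_num
    · congr 1
      rw [← pow_mul, mul_comm l 2]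
  rw [hstep1, parts_all hα hβ l le_rfl, Nat.sub_self, show l + l = 2*l from by omega,
    int_G0G2l hα hβ, W_eq hα hβ, hc]
  have hasc : ascPoch (2*α+2*β+2) (2*l) ≠ 0 := by
    apply ascPoch_ne_zero
    simp only [Complex.add_re, Complex.mul_re, Complex.re_ofNat, Complex.im_ofNat,
      zero_mul, sub_zero]
    norm_num
    linarith
  have h2l : ((2:ℂ))^(2*l) ≠ 0 := pow_ne_zero _ two_ne_zero
  have hf : ((l.factorial:ℂ)) ≠ 0 := Nat.cast_ne_zero.2 l.factorial_ne_zero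
  field_simp

end main

theorem stmt1 (l : ℕ) (α β : ℂ) (hα : α.re > -1/2) (hβ : β.re > -1/2) :
    ∫ t in (-1 : ℝ)..1, (jacobiP l α β t) ^ 2 * (1 - (t : ℂ)) ^ (2 * α) * (1 + (t : ℂ)) ^ (2 * β)
      = (2 : ℂ) ^ (2 * α + 2 * β + 1) / ((l.factorial : ℂ)) ^ 2 *
        betaFn (2 * α + 1) (2 * β + 1) * (W l α β / ascPoch (2 * α + 2 * β + 2) (2 * l)) := by
  exact stmt1' hα hβ
end

section
/- For all integers l ≥ 1 and real d ≥ d_0 > 0, the integral ∫_{cos r}^{1} P_l^{(d/2-1, d_0/2-1)}(t) (1-t)^{d/2-1}(1+t)^{d_0/2-1} dt equals 2^{d/2+d_0/2-1} l^{-1} (sin(r/2))^d (cos(r/2))^{d_0} P_{l-1}^{(d/2, d_0/2)}(cos r), for every r ∈ [0, π]. -/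
open MeasureTheory intervalIntegral

namespace Stmt6Aux
open Polynomial Complex Set

noncomputable def Qp (a b : ℂ) (p : ℂ[X]) : ℂ[X] :=
  -(C a) * (1 + X) * p + C b * (1 - X) * p + (1 - X) * ((1 + X) * derivative p)

noncomputable def Pp (α β : ℂ) (l : ℕ) : ℕ → ℂ[X]
  | 0 => 1
  | k + 1 => Qp ((l : ℂ) + α - k) ((l : ℂ) + β - k) (Pp α β l k)

lemma hasDerivAt_ofReal (t : ℝ) : HasDerivAt (fun s : ℝ => (s : ℂ)) 1 t := by
  exact (hasDerivAt_id (t : ℂ)).comp_ofReal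

lemma key (a b : ℂ) (p : ℂ[X]) {t : ℝ} (ht : t ∈ Ioo (-1 : ℝ) 1) :
    HasDerivAt (fun s : ℝ => (1 - (s : ℂ)) ^ a * (1 + (s : ℂ)) ^ b * p.eval (s : ℂ))
      ((1 - (t : ℂ)) ^ (a - 1) * (1 + (t : ℂ)) ^ (b - 1) * (Qp a b p).eval (t : ℂ)) t := by
  have h1m : (0 : ℝ) < 1 - t := by linarith [ht.2]
  have h1p : (0 : ℝ) < 1 + t := by linarith [ht.1]
  have hm : HasDerivAt (fun z : ℂ => 1 - z) (-1) (t : ℂ) := by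
    simpa using (hasDerivAt_id (t : ℂ)).const_sub 1
  have hp : HasDerivAt (fun z : ℂ => 1 + z) 1 (t : ℂ) := by
    simpa using (hasDerivAt_id (t : ℂ)).const_add 1
  have hms : (1 - (t : ℂ)) ∈ Complex.slitPlane := Or.inl (by simpa using h1m)
  have hps : (1 + (t : ℂ)) ∈ Complex.slitPlane := Or.inl (by simpa using h1p)
  have hmne : (1 - (t : ℂ)) ≠ 0 := by
    intro h
    have := congrArg Complex.re h
    simp at this; linarith
  have hpne : (1 + (t : ℂ)) ≠ 0 := by
    intro h
    have := congrArg Complex.re h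
    simp at this; linarith
  have H1 : HasDerivAt (fun s : ℝ => (1 - (s : ℂ)) ^ a)
      (a * (1 - (t : ℂ)) ^ (a - 1) * (-1)) t := (hm.cpow_const hms).comp_ofReal
  have H2 : HasDerivAt (fun s : ℝ => (1 + (s : ℂ)) ^ b)
      (b * (1 + (t : ℂ)) ^ (b - 1) * 1) t := (hp.cpow_const hps).comp_ofReal
  have H3 : HasDerivAt (fun s : ℝ => p.eval (s : ℂ)) (p.derivative.eval (t : ℂ)) t :=
    (p.hasDerivAt (t : ℂ)).comp_ofReal
  have := (H1.mul H2).mul H3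
  refine this.congr_deriv ?_
  symm
  simp only [Pi.mul_apply]
  have ea : (1 - (t : ℂ)) ^ a = (1 - (t : ℂ)) ^ (a - 1) * (1 - (t : ℂ)) := by
    rw [show a = a - 1 + 1 by ring] at *
    rw [Complex.cpow_add _ _ hmne, Complex.cpow_one]; ring_nf
  have eb : (1 + (t : ℂ)) ^ b = (1 + (t : ℂ)) ^ (b - 1) * (1 + (t : ℂ)) := by
    rw [show b = b - 1 + 1 by ring] at *
    rw [Complex.cpow_add _ _ hpne, Complex.cpow_one]; ring_nf
  rw [ea, eb]
  simp only [Qp, Polynomial.eval_add, Polynomial.eval_mul, Polynomial.eval_neg, Polynomial.eval_C,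
    Polynomial.eval_one, Polynomial.eval_X, Polynomial.eval_sub]
  push_cast
  ring

lemma iter (α β : ℂ) (l : ℕ) (k : ℕ) :
    ∀ t ∈ Ioo (-1 : ℝ) 1,
      iteratedDeriv k (fun s : ℝ => (1 - (s : ℂ)) ^ ((l : ℂ) + α) * (1 + (s : ℂ)) ^ ((l : ℂ) + β)) t
        = (1 - (t : ℂ)) ^ ((l : ℂ) + α - k) * (1 + (t : ℂ)) ^ ((l : ℂ) + β - k) *
            (Pp α β l k).eval (t : ℂ) := by
  induction k with
  | zero => intro t ht; simp [Pp]
  | succ k ih =>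
    intro t ht
    rw [iteratedDeriv_succ]
    have hev : iteratedDeriv k (fun s : ℝ => (1 - (s : ℂ)) ^ ((l : ℂ) + α) * (1 + (s : ℂ)) ^ ((l : ℂ) + β))
        =ᶠ[nhds t] fun s : ℝ => (1 - (s : ℂ)) ^ ((l : ℂ) + α - k) * (1 + (s : ℂ)) ^ ((l : ℂ) + β - k) *
            (Pp α β l k).eval (s : ℂ) :=
      Filter.eventuallyEq_of_mem (isOpen_Ioo.mem_nhds ht) (fun s hs => ih s hs)
    rw [hev.deriv_eq, (key _ _ _ ht).deriv]
    have e1 : (l : ℂ) + α - k - 1 = (l : ℂ) + α - (k + 1 : ℕ) := by push_cast; ring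
    have e2 : (l : ℂ) + β - k - 1 = (l : ℂ) + β - (k + 1 : ℕ) := by push_cast; ring
    rw [e1, e2]
    rfl

end Stmt6Aux


namespace Stmt6Aux2
open Polynomial Complex Set

lemma norm_cpow_real {x : ℝ} (hx : 0 < x) (w : ℂ) : ‖((x : ℂ)) ^ w‖ = x ^ w.re := by
  rw [Complex.norm_cpow_eq_rpow_re_of_pos hx]

lemma contAt (a b : ℂ) (p : ℂ[X]) {t : ℝ} (ht : t ∈ Ioo (-1 : ℝ) 1) :
    ContinuousAt (fun t : ℝ => (1 - (t : ℂ)) ^ a * (1 + (t : ℂ)) ^ b * p.eval (t : ℂ)) t := by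
  have h1 : ContinuousAt (fun t : ℝ => (1 - (t : ℂ)) ^ a) t := by
    have h := continuousAt_cpow_const (a := 1 - (t : ℂ)) (b := a)
      (Or.inl (by simpa using by linarith [ht.2] : (0:ℝ) < 1 - t))
    have hin : ContinuousAt (fun t : ℝ => 1 - (t : ℂ)) t := by fun_prop
    exact ContinuousAt.comp (x := t) h hin
  have h2 : ContinuousAt (fun t : ℝ => (1 + (t : ℂ)) ^ b) t := by
    have h := continuousAt_cpow_const (a := 1 + (t : ℂ)) (b := b)
      (Or.inl (by simpa using by linarith [ht.1] : (0:ℝ) < 1 + t))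
    have hin : ContinuousAt (fun t : ℝ => 1 + (t : ℂ)) t := by fun_prop
    exact ContinuousAt.comp (x := t) h hin
  have h3 : ContinuousAt (fun t : ℝ => p.eval (t : ℂ)) t := by fun_prop
  exact (h1.mul h2).mul h3

lemma contOn (a b : ℂ) (ha : 0 < a.re) (hb : 0 < b.re) (p : ℂ[X]) :
    ContinuousOn (fun t : ℝ => (1 - (t : ℂ)) ^ a * (1 + (t : ℂ)) ^ b * p.eval (t : ℂ))
      (Icc (-1 : ℝ) 1) := by
  intro t ht
  apply ContinuousAt.continuousWithinAt
  have h1 : ContinuousAt (fun t : ℝ => (1 - (t : ℂ)) ^ a) t := by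
    have h := continuousAt_cpow_const_of_re_pos (z := 1 - (t : ℂ))
      (Or.inl (by simpa using by linarith [ht.2] : (0:ℝ) ≤ 1 - t)) ha
    have hin : ContinuousAt (fun t : ℝ => 1 - (t : ℂ)) t := by fun_prop
    exact ContinuousAt.comp (x := t) h hin
  have h2 : ContinuousAt (fun t : ℝ => (1 + (t : ℂ)) ^ b) t := by
    have h := continuousAt_cpow_const_of_re_pos (z := 1 + (t : ℂ))
      (Or.inl (by simpa using by linarith [ht.1] : (0:ℝ) ≤ 1 + t)) hb
    have hin : ContinuousAt (fun t : ℝ => 1 + (t : ℂ)) t := by fun_prop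
    exact ContinuousAt.comp (x := t) h hin
  have h3 : ContinuousAt (fun t : ℝ => p.eval (t : ℂ)) t := by fun_prop
  exact (h1.mul h2).mul h3

lemma rpow_bound {c x : ℝ} (h1 : 1 ≤ x) (h2 : x ≤ 2) : x ^ c ≤ 2 ^ c + 1 := by
  rcases le_or_gt 0 c with h | h
  · have := Real.rpow_le_rpow (by linarith) h2 h
    linarith
  · have hx := Real.rpow_le_one_of_one_le_of_nonpos h1 h.le
    have h2c : (0:ℝ) < 2 ^ c := Real.rpow_pos_of_pos two_pos c
    linarith

lemma integrableAux (a b : ℂ) (ha : -1 < a.re) (hb : -1 < b.re) (p : ℂ[X]) :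
    IntervalIntegrable (fun t : ℝ => (1 - (t : ℂ)) ^ a * (1 + (t : ℂ)) ^ b * p.eval (t : ℂ))
      volume (-1) 1 := by
  obtain ⟨M, hM⟩ := isCompact_Icc.exists_bound_of_continuousOn
    (Continuous.continuousOn (s := Icc (-1:ℝ) 1)
      (by fun_prop : Continuous fun t : ℝ => p.eval (t : ℂ)))
  have hM0 : 0 ≤ M := le_trans (norm_nonneg _) (hM 0 (by norm_num))
  have key : ∀ t : ℝ, t ∈ Ioo (-1:ℝ) 1 →
      ‖(1 - (t : ℂ)) ^ a * (1 + (t : ℂ)) ^ b * p.eval (t : ℂ)‖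
        = (1 - t) ^ a.re * (1 + t) ^ b.re * ‖p.eval (t : ℂ)‖ := by
    intro t ht
    rw [norm_mul, norm_mul,
      show (1 - (t : ℂ)) = ((1 - t : ℝ) : ℂ) by push_cast; ring,
      show (1 + (t : ℂ)) = ((1 + t : ℝ) : ℂ) by push_cast; ring,
      norm_cpow_real (by linarith [ht.2]) a, norm_cpow_real (by linarith [ht.1]) b]
  apply IntervalIntegrable.trans (b := 0)
  · -- on (-1, 0)
    rw [intervalIntegrable_iff, uIoc_of_le (by norm_num : (-1:ℝ) ≤ 0),
      integrableOn_Ioc_iff_integrableOn_Ioo]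
    have hg : IntegrableOn (fun t : ℝ => (M * (2 ^ a.re + 1)) * (t + 1) ^ b.re)
        (Ioo (-1:ℝ) 0) volume := by
      have h0 : IntervalIntegrable (fun x : ℝ => x ^ b.re) volume 0 1 :=
        intervalIntegrable_rpow' hb
      have h1 := h0.comp_add_right 1
      norm_num at h1
      rw [intervalIntegrable_iff, uIoc_of_le (by norm_num : (-1:ℝ) ≤ 0),
        integrableOn_Ioc_iff_integrableOn_Ioo] at h1
      exact h1.const_mul _
    apply Integrable.mono' hg
    · exact (ContinuousOn.aestronglyMeasurable
        (fun t ht => (contAt a b p ⟨ht.1, lt_trans ht.2 one_pos⟩).continuousWithinAt)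
        measurableSet_Ioo)
    · rw [ae_restrict_iff' measurableSet_Ioo]
      apply Filter.Eventually.of_forall
      intro t ht
      have ht' : t ∈ Ioo (-1:ℝ) 1 := ⟨ht.1, lt_trans ht.2 one_pos⟩
      rw [key t ht']
      have hb1 : (1 + t) ^ b.re ≤ (1 + t) ^ b.re := le_refl _
      have hb2 : (1 - t) ^ a.re ≤ 2 ^ a.re + 1 := rpow_bound (by linarith [ht.2]) (by linarith [ht.1])
      have hp : ‖p.eval (t : ℂ)‖ ≤ M := hM t ⟨le_of_lt ht'.1, le_of_lt ht'.2⟩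
      have h1p : (0:ℝ) < 1 + t := by linarith [ht.1]
      have h1m : (0:ℝ) < 1 - t := by linarith [ht'.2]
      have e : (1:ℝ) + t = t + 1 := by ring
      rw [e]
      calc (1 - t) ^ a.re * (t + 1) ^ b.re * ‖p.eval (t : ℂ)‖
          ≤ (2 ^ a.re + 1) * (t + 1) ^ b.re * M := by
            apply mul_le_mul _ hp (norm_nonneg _)
              (mul_nonneg (by positivity) (Real.rpow_nonneg (by linarith) _))
            apply mul_le_mul hb2 le_rfl (Real.rpow_nonneg (by linarith) _) (by positivity)
        _ = M * (2 ^ a.re + 1) * (t + 1) ^ b.re := by ring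
  · -- on (0, 1)
    rw [intervalIntegrable_iff, uIoc_of_le (by norm_num : (0:ℝ) ≤ 1),
      integrableOn_Ioc_iff_integrableOn_Ioo]
    have hg : IntegrableOn (fun t : ℝ => (M * (2 ^ b.re + 1)) * (1 - t) ^ a.re)
        (Ioo (0:ℝ) 1) volume := by
      have h0 : IntervalIntegrable (fun x : ℝ => x ^ a.re) volume 0 1 :=
        intervalIntegrable_rpow' ha
      have h1 := (h0.comp_sub_left 1).symm
      norm_num at h1
      rw [intervalIntegrable_iff, uIoc_of_le (by norm_num : (0:ℝ) ≤ 1),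
        integrableOn_Ioc_iff_integrableOn_Ioo] at h1
      exact h1.const_mul _
    apply Integrable.mono' hg
    · exact (ContinuousOn.aestronglyMeasurable
        (fun t ht => (contAt a b p ⟨lt_trans (by norm_num) ht.1, ht.2⟩).continuousWithinAt)
        measurableSet_Ioo)
    · rw [ae_restrict_iff' measurableSet_Ioo]
      apply Filter.Eventually.of_forall
      intro t ht
      have ht' : t ∈ Ioo (-1:ℝ) 1 := ⟨lt_trans (by norm_num) ht.1, ht.2⟩
      rw [key t ht']
      have hb2 : (1 + t) ^ b.re ≤ 2 ^ b.re + 1 := rpow_bound (by linarith [ht.1]) (by linarith [ht.2])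
      have hp : ‖p.eval (t : ℂ)‖ ≤ M := hM t ⟨le_of_lt ht'.1, le_of_lt ht'.2⟩
      have h1m : (0:ℝ) < 1 - t := by linarith [ht.2]
      calc (1 - t) ^ a.re * (1 + t) ^ b.re * ‖p.eval (t : ℂ)‖
          ≤ (1 - t) ^ a.re * (2 ^ b.re + 1) * M := by
            apply mul_le_mul _ hp (norm_nonneg _) (by positivity)
            apply mul_le_mul le_rfl hb2 (Real.rpow_nonneg (by linarith [ht.1]) _)
              (Real.rpow_nonneg h1m.le _)
        _ = M * (2 ^ b.re + 1) * (1 - t) ^ a.re := by ring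

end Stmt6Aux2

namespace Stmt6Main
open Polynomial Complex Set Stmt6Aux Stmt6Aux2

lemma ne_of_pos_re {t : ℝ} (h : 0 < t) : ((t : ℂ)) ≠ 0 := by
  exact_mod_cast h.ne'

lemma cancel_cpow {z : ℂ} (hz : z ≠ 0) (w : ℂ) : z ^ (-w) * z ^ w = 1 := by
  rw [← Complex.cpow_add _ _ hz]; simp

lemma pp_top (l : ℕ) (hl : 1 ≤ l) (α β : ℂ) :
    Pp α β l l = Qp (α + 1) (β + 1) (Pp α β l (l - 1)) := by
  have h : l - 1 + 1 = l := Nat.succ_pred_eq_of_pos hl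
  have h2 : Pp α β l (l - 1 + 1)
      = Qp ((l:ℂ) + α - ((l-1 : ℕ) : ℂ)) ((l:ℂ) + β - ((l-1 : ℕ) : ℂ)) (Pp α β l (l - 1)) := rfl
  rw [h] at h2
  rw [h2]
  congr 1 <;> rw [Nat.cast_sub hl] <;> push_cast <;> ring

lemma integrand_eq (l : ℕ) (hl : 1 ≤ l) (α β : ℂ) {t : ℝ} (ht : t ∈ Ioo (-1:ℝ) 1) :
    jacobiP l α β t * (1 - (t : ℂ)) ^ α * (1 + (t : ℂ)) ^ β
      = ((-1 : ℂ) ^ l / (2 ^ l * (l.factorial : ℂ))) *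
          ((1 - (t : ℂ)) ^ α * (1 + (t : ℂ)) ^ β *
            (Qp (α + 1) (β + 1) (Pp α β l (l - 1))).eval (t : ℂ)) := by
  have h1m : (0:ℝ) < 1 - t := by linarith [ht.2]
  have h1p : (0:ℝ) < 1 + t := by linarith [ht.1]
  have hA : (1 - (t:ℂ)) ≠ 0 := by
    rw [show (1 - (t:ℂ)) = ((1 - t : ℝ) : ℂ) by push_cast; ring]; exact ne_of_pos_re h1m
  have hB : (1 + (t:ℂ)) ≠ 0 := by
    rw [show (1 + (t:ℂ)) = ((1 + t : ℝ) : ℂ) by push_cast; ring]; exact ne_of_pos_re h1p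
  rw [jacobiP, iter α β l l t ht, show (l:ℂ) + α - l = α by ring, show (l:ℂ) + β - l = β by ring,
    pp_top l hl α β]
  have e1 := cancel_cpow hA α
  have e2 := cancel_cpow hB β
  calc ((-1 : ℂ) ^ l / (2 ^ l * (l.factorial : ℂ))) * (1 - (t : ℂ)) ^ (-α) * (1 + (t : ℂ)) ^ (-β) *
        ((1 - (t : ℂ)) ^ α * (1 + (t : ℂ)) ^ β *
          (Qp (α + 1) (β + 1) (Pp α β l (l - 1))).eval (t : ℂ)) * (1 - (t : ℂ)) ^ α *
          (1 + (t : ℂ)) ^ β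
      = ((-1 : ℂ) ^ l / (2 ^ l * (l.factorial : ℂ))) *
          (((1 - (t : ℂ)) ^ (-α) * (1 - (t : ℂ)) ^ α) * ((1 + (t : ℂ)) ^ (-β) * (1 + (t : ℂ)) ^ β) *
            ((1 - (t : ℂ)) ^ α * (1 + (t : ℂ)) ^ β *
              (Qp (α + 1) (β + 1) (Pp α β l (l - 1))).eval (t : ℂ))) := by ring
    _ = _ := by rw [e1, e2]; ring

lemma integral_eq (l : ℕ) (hl : 1 ≤ l) (α β : ℂ) (hα : -1 < α.re) (hβ : -1 < β.re)
    {x₀ : ℝ} (hxm : -1 ≤ x₀) (hx1 : x₀ < 1) :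
    ∫ t in x₀..1, jacobiP l α β t * (1 - (t : ℂ)) ^ α * (1 + (t : ℂ)) ^ β
      = -(((-1 : ℂ) ^ l / (2 ^ l * (l.factorial : ℂ))) *
          ((1 - (x₀ : ℂ)) ^ (α + 1) * (1 + (x₀ : ℂ)) ^ (β + 1) *
            (Pp α β l (l - 1)).eval (x₀ : ℂ))) := by
  set c : ℂ := (-1 : ℂ) ^ l / (2 ^ l * (l.factorial : ℂ)) with hc
  set p : ℂ[X] := Pp α β l (l - 1) with hp
  have hα1 : 0 < (α + 1).re := by simp [Complex.add_re]; linarith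
  have hβ1 : 0 < (β + 1).re := by simp [Complex.add_re]; linarith
  have hcont : ContinuousOn
      (fun t : ℝ => c * ((1 - (t : ℂ)) ^ (α+1) * (1 + (t : ℂ)) ^ (β+1) * p.eval (t : ℂ)))
      (Icc x₀ 1) :=
    continuousOn_const.mul ((contOn (α+1) (β+1) hα1 hβ1 p).mono (Icc_subset_Icc hxm le_rfl))
  have hderiv : ∀ t ∈ Ioo x₀ 1,
      HasDerivAt (fun t : ℝ => c * ((1 - (t : ℂ)) ^ (α+1) * (1 + (t : ℂ)) ^ (β+1) * p.eval (t : ℂ)))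
        (jacobiP l α β t * (1 - (t : ℂ)) ^ α * (1 + (t : ℂ)) ^ β) t := by
    intro t ht
    have ht' : t ∈ Ioo (-1:ℝ) 1 := ⟨lt_of_lt_of_le' ht.1 hxm, ht.2⟩
    have hk := (key (α+1) (β+1) p ht').const_mul c
    rw [show α + 1 - 1 = α by ring, show β + 1 - 1 = β by ring] at hk
    rw [integrand_eq l hl α β ht']
    exact hk
  have hint : IntervalIntegrable
      (fun t : ℝ => jacobiP l α β t * (1 - (t : ℂ)) ^ α * (1 + (t : ℂ)) ^ β) volume x₀ 1 := by
    have hbase : IntervalIntegrable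
        (fun t : ℝ => c * ((1 - (t : ℂ)) ^ α * (1 + (t : ℂ)) ^ β *
          (Qp (α + 1) (β + 1) p).eval (t : ℂ))) volume x₀ 1 := by
      have h0 := (integrableAux α β hα hβ (Qp (α + 1) (β + 1) p)).const_mul c
      apply h0.mono_set
      rw [uIcc_of_le hx1.le, uIcc_of_le (by norm_num : (-1:ℝ) ≤ 1)]
      exact Icc_subset_Icc hxm le_rfl
    apply hbase.congr_ae
    rw [uIoc_of_le hx1.le, ← Measure.restrict_congr_set Ioo_ae_eq_Ioc]
    apply (ae_restrict_mem measurableSet_Ioo).mono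
    intro t ht
    have ht' : t ∈ Ioo (-1:ℝ) 1 := ⟨lt_of_lt_of_le' ht.1 hxm, ht.2⟩
    exact (integrand_eq l hl α β ht').symm
  rw [integral_eq_sub_of_hasDerivAt_of_le hx1.le hcont hderiv hint]
  have hG1 : c * ((1 - ((1:ℝ) : ℂ)) ^ (α+1) * (1 + ((1:ℝ) : ℂ)) ^ (β+1) * p.eval ((1:ℝ) : ℂ)) = 0 := by
    have h0 : (1 - ((1:ℝ) : ℂ)) = 0 := by norm_num
    have hne : α + 1 ≠ 0 := by
      intro h
      have := congrArg Complex.re h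
      simp [Complex.add_re] at this; linarith
    rw [h0, Complex.zero_cpow hne]
    ring
  rw [hG1, zero_sub]

lemma jacobi_eval (l : ℕ) (hl : 1 ≤ l) (α β : ℂ) {x₀ : ℝ} (hx : x₀ ∈ Ioo (-1:ℝ) 1) :
    jacobiP (l - 1) (α + 1) (β + 1) x₀
      = ((-1 : ℂ) ^ (l-1) / (2 ^ (l-1) * ((l-1).factorial : ℂ))) *
          (Pp α β l (l - 1)).eval (x₀ : ℂ) := by
  have h1m : (0:ℝ) < 1 - x₀ := by linarith [hx.2]
  have h1p : (0:ℝ) < 1 + x₀ := by linarith [hx.1]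
  have hA : (1 - (x₀:ℂ)) ≠ 0 := by
    rw [show (1 - (x₀:ℂ)) = ((1 - x₀ : ℝ) : ℂ) by push_cast; ring]; exact ne_of_pos_re h1m
  have hB : (1 + (x₀:ℂ)) ≠ 0 := by
    rw [show (1 + (x₀:ℂ)) = ((1 + x₀ : ℝ) : ℂ) by push_cast; ring]; exact ne_of_pos_re h1p
  rw [jacobiP]
  have e1 : ((l - 1 : ℕ) : ℂ) + (α + 1) = (l : ℂ) + α := by
    rw [Nat.cast_sub hl]; push_cast; ring
  have e2 : ((l - 1 : ℕ) : ℂ) + (β + 1) = (l : ℂ) + β := by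
    rw [Nat.cast_sub hl]; push_cast; ring
  rw [e1, e2, iter α β l (l-1) x₀ hx]
  have e3 : (l : ℂ) + α - ((l - 1 : ℕ) : ℂ) = α + 1 := by
    rw [Nat.cast_sub hl]; push_cast; ring
  have e4 : (l : ℂ) + β - ((l - 1 : ℕ) : ℂ) = β + 1 := by
    rw [Nat.cast_sub hl]; push_cast; ring
  rw [e3, e4]
  have c1 := cancel_cpow hA (α + 1)
  have c2 := cancel_cpow hB (β + 1)
  calc ((-1 : ℂ) ^ (l-1) / (2 ^ (l-1) * ((l-1).factorial : ℂ))) * (1 - (x₀ : ℂ)) ^ (-(α+1)) *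
        (1 + (x₀ : ℂ)) ^ (-(β+1)) *
        ((1 - (x₀ : ℂ)) ^ (α+1) * (1 + (x₀ : ℂ)) ^ (β+1) * (Pp α β l (l - 1)).eval (x₀ : ℂ))
      = ((-1 : ℂ) ^ (l-1) / (2 ^ (l-1) * ((l-1).factorial : ℂ))) *
          (((1 - (x₀ : ℂ)) ^ (-(α+1)) * (1 - (x₀ : ℂ)) ^ (α+1)) *
            ((1 + (x₀ : ℂ)) ^ (-(β+1)) * (1 + (x₀ : ℂ)) ^ (β+1)) *
            (Pp α β l (l - 1)).eval (x₀ : ℂ)) := by ring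
    _ = _ := by rw [c1, c2]; ring

end Stmt6Main

open Polynomial Complex Set Stmt6Aux Stmt6Aux2 Stmt6Main

theorem stmt6 (l : ℕ) (hl : 1 ≤ l) (d d₀ : ℝ) (hd : d₀ ≤ d) (hd₀ : 0 < d₀)
    (r : ℝ) (hr : r ∈ Set.Icc 0 Real.pi) :
    ∫ t in Real.cos r..1,
        jacobiP l ((d : ℂ)/2 - 1) ((d₀ : ℂ)/2 - 1) t *
          (1 - (t : ℂ)) ^ ((d : ℂ)/2 - 1) * (1 + (t : ℂ)) ^ ((d₀ : ℂ)/2 - 1)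
      = (2 : ℂ) ^ ((d : ℂ)/2 + (d₀ : ℂ)/2 - 1) * (l : ℂ)⁻¹ *
          ((Real.sin (r/2) : ℂ)) ^ (d : ℂ) * ((Real.cos (r/2) : ℂ)) ^ (d₀ : ℂ) *
          jacobiP (l - 1) ((d : ℂ)/2) ((d₀ : ℂ)/2) (Real.cos r) := by
  have hd0 : (0:ℝ) < d := lt_of_lt_of_le hd₀ hd
  obtain ⟨hr0, hrπ⟩ := hr
  rcases eq_or_lt_of_le hr0 with h0 | h0
  · -- r = 0
    rw [← h0]
    simp only [Real.cos_zero, intervalIntegral.integral_same]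
    rw [show ((0:ℝ)/2) = (0:ℝ) by norm_num, Real.sin_zero, Complex.ofReal_zero,
      Complex.zero_cpow (Complex.ofReal_ne_zero.mpr hd0.ne')]
    ring
  · have hx1 : Real.cos r < 1 := by
      have := Real.cos_lt_cos_of_nonneg_of_le_pi (le_refl 0) hrπ h0
      simpa [Real.cos_zero] using this
    have hxm : -1 ≤ Real.cos r := Real.neg_one_le_cos r
    set α : ℂ := (d:ℂ)/2 - 1 with hαdef
    set β : ℂ := (d₀:ℂ)/2 - 1 with hβdef
    have hαre : -1 < α.re := by
      rw [hαdef, show (d:ℂ)/2 - 1 = ((d/2 - 1 : ℝ) : ℂ) by push_cast; ring, Complex.ofReal_re]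
      linarith
    have hβre : -1 < β.re := by
      rw [hβdef, show (d₀:ℂ)/2 - 1 = ((d₀/2 - 1 : ℝ) : ℂ) by push_cast; ring, Complex.ofReal_re]
      linarith
    have hβ1ne : β + 1 ≠ 0 := by
      have hre : (β + 1).re = d₀/2 := by
        rw [hβdef, show (d₀:ℂ)/2 - 1 + 1 = ((d₀/2 : ℝ) : ℂ) by push_cast; ring, Complex.ofReal_re]
      intro h
      rw [h] at hre
      simp at hre
      linarith
    rw [integral_eq l hl α β hαre hβre hxm hx1,
      show (d:ℂ)/2 = α + 1 by rw [hαdef]; ring,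
      show (d₀:ℂ)/2 = β + 1 by rw [hβdef]; ring]
    rcases eq_or_lt_of_le hrπ with hπ | hπ
    · -- r = π
      rw [hπ, Real.cos_pi]
      rw [show (1 + ((-1:ℝ):ℂ)) = 0 by push_cast; ring, Complex.zero_cpow hβ1ne,
        Real.cos_pi_div_two, Complex.ofReal_zero,
        Complex.zero_cpow (Complex.ofReal_ne_zero.mpr hd₀.ne')]
      ring
    · -- 0 < r < π
      have hx : Real.cos r ∈ Ioo (-1:ℝ) 1 := by
        refine ⟨?_, hx1⟩
        have := Real.cos_lt_cos_of_nonneg_of_le_pi hr0 (le_refl Real.pi) hπ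
        simpa [Real.cos_pi] using this
      rw [jacobi_eval l hl α β hx]
      -- trig facts
      have hpi := Real.pi_pos
      have hs : 0 < Real.sin (r/2) :=
        Real.sin_pos_of_pos_of_lt_pi (by linarith) (by linarith)
      have hcs : 0 < Real.cos (r/2) :=
        Real.cos_pos_of_mem_Ioo ⟨by linarith, by linarith⟩
      have hdbl : Real.cos r = 2 * Real.cos (r/2) ^ 2 - 1 := by
        have h := Real.cos_two_mul (r/2)
        rw [show 2 * (r/2) = r by ring] at h
        exact h
      have hpyth := Real.sin_sq_add_cos_sq (r/2)
      have hsin2sq : 1 - Real.cos r = 2 * Real.sin (r/2) ^ 2 := by nlinarith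
      have hcos2sq : 1 + Real.cos r = 2 * Real.cos (r/2) ^ 2 := by nlinarith
      -- cpow → rpow conversions
      have hA : (1 - ((Real.cos r : ℝ) : ℂ)) ^ (α + 1)
          = (((1 - Real.cos r) ^ (d/2 : ℝ) : ℝ) : ℂ) := by
        rw [show (1 - ((Real.cos r : ℝ) : ℂ)) = ((1 - Real.cos r : ℝ) : ℂ) by push_cast; ring,
          show α + 1 = ((d/2 : ℝ) : ℂ) by rw [hαdef]; push_cast; ring,
          ← Complex.ofReal_cpow (by linarith [hx.2]) (d/2)]
      have hB : (1 + ((Real.cos r : ℝ) : ℂ)) ^ (β + 1)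
          = (((1 + Real.cos r) ^ (d₀/2 : ℝ) : ℝ) : ℂ) := by
        rw [show (1 + ((Real.cos r : ℝ) : ℂ)) = ((1 + Real.cos r : ℝ) : ℂ) by push_cast; ring,
          show β + 1 = ((d₀/2 : ℝ) : ℂ) by rw [hβdef]; push_cast; ring,
          ← Complex.ofReal_cpow (by linarith [hx.1]) (d₀/2)]
      have hS : ((Real.sin (r/2) : ℝ) : ℂ) ^ ((d : ℝ) : ℂ)
          = ((Real.sin (r/2) ^ (d : ℝ) : ℝ) : ℂ) := (Complex.ofReal_cpow hs.le d).symm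
      have hC : ((Real.cos (r/2) : ℝ) : ℂ) ^ ((d₀ : ℝ) : ℂ)
          = ((Real.cos (r/2) ^ (d₀ : ℝ) : ℝ) : ℂ) := (Complex.ofReal_cpow hcs.le d₀).symm
      have h2pow : (2:ℂ) ^ (α + 1 + (β + 1) - 1)
          = (((2:ℝ) ^ (d/2 + d₀/2 - 1 : ℝ) : ℝ) : ℂ) := by
        rw [show (α + 1 + (β + 1) - 1) = ((d/2 + d₀/2 - 1 : ℝ) : ℂ) by
            rw [hαdef, hβdef]; push_cast; ring,
          show (2:ℂ) = ((2:ℝ) : ℂ) by norm_num,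
          ← Complex.ofReal_cpow (by norm_num) _]
      -- real rpow computations
      have hreal1 : (1 - Real.cos r) ^ (d/2 : ℝ) = 2 ^ (d/2 : ℝ) * Real.sin (r/2) ^ (d : ℝ) := by
        rw [hsin2sq, Real.mul_rpow (by norm_num) (by positivity)]
        congr 1
        rw [← Real.rpow_natCast (Real.sin (r/2)) 2, ← Real.rpow_mul hs.le]
        congr 1
        push_cast
        ring
      have hreal2 : (1 + Real.cos r) ^ (d₀/2 : ℝ) = 2 ^ (d₀/2 : ℝ) * Real.cos (r/2) ^ (d₀ : ℝ) := by
        rw [hcos2sq, Real.mul_rpow (by norm_num) (by positivity)]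
        congr 1
        rw [← Real.rpow_natCast (Real.cos (r/2)) 2, ← Real.rpow_mul hcs.le]
        congr 1
        push_cast
        ring
      have h2add : (2:ℝ) ^ (d/2 + d₀/2 - 1 : ℝ) = 2 ^ (d/2 : ℝ) * 2 ^ (d₀/2 : ℝ) / 2 := by
        rw [Real.rpow_sub two_pos, Real.rpow_add two_pos, Real.rpow_one]
      -- constants
      have hlc : l - 1 + 1 = l := Nat.succ_pred_eq_of_pos hl
      have hfac : (l.factorial : ℂ) = (l : ℂ) * ((l-1).factorial : ℂ) := by
        exact_mod_cast (Nat.mul_factorial_pred (by omega)).symm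
      have hpow2 : (2:ℂ) ^ l = 2 ^ (l-1) * 2 := by rw [← pow_succ, hlc]
      have hsgn : (-1:ℂ) ^ l = (-1) ^ (l-1) * (-1) := by rw [← pow_succ, hlc]
      have hlne : (l : ℂ) ≠ 0 := by exact_mod_cast Nat.one_le_iff_ne_zero.mp hl
      have hfacne : ((l-1).factorial : ℂ) ≠ 0 := by exact_mod_cast (l-1).factorial_ne_zero
      have h2ne : (2:ℂ) ^ (l-1) ≠ 0 := pow_ne_zero _ two_ne_zero
      have hconst : -((-1:ℂ) ^ l / (2 ^ l * (l.factorial : ℂ))) * (2 * (l:ℂ))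
          = (-1:ℂ) ^ (l-1) / (2 ^ (l-1) * ((l-1).factorial : ℂ)) := by
        rw [hfac, hpow2, hsgn]
        field_simp
      rw [hA, hB, hS, hC, h2pow, hreal1, hreal2, h2add, ← hconst]
      push_cast
      field_simp [hlne]
end

section
/- Let M be a compact distance-invariant metric measure space with probability measure μ and metric θ, and ξ a finite measure on the set of radii I. For any N-point subset D_N ⊂ M, the invariance principle λ[ξ, D_N] + θ^Δ[ξ, D_N] = ⟨θ^Δ(ξ)⟩ N² holds, where λ[ξ, D_N] = ∫_I ∫_M (#(B(y,r) ∩ D_N) - N v(r))² dμ(y) dξ(r), θ^Δ[ξ, D_N] = Σ_{x_1, x_2 ∈ D_N} θ^Δ(ξ, x_1, x_2), and ⟨θ^Δ(ξ)⟩ = ∫_{M×M} θ^Δ(ξ, y_1, y_2) dμ(y_1) dμ(y_2) = ∫_I (v(r) - v(r)²) dξ(r). -/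
open MeasureTheory Metric
open scoped symmDiff

lemma integ_aux {ξ : Measure ℝ} [IsFiniteMeasure ξ] {f : ℝ → ℝ}
    (hf : Monotone f) (h0 : ∀ r, 0 ≤ f r) (h1 : ∀ r, f r ≤ 1) : Integrable f ξ :=
  ⟨hf.measurable.aestronglyMeasurable,
    HasFiniteIntegral.of_bounded (C := 1) (ae_of_all _ fun r => by
      rw [Real.norm_eq_abs, abs_of_nonneg (h0 r)]; exact h1 r)⟩

theorem stmt15 {M : Type*} [MetricSpace M] [CompactSpace M] [MeasurableSpace M]
    [BorelSpace M] (μ : Measure M) [IsProbabilityMeasure μ]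
    (ξ : Measure ℝ) [IsFiniteMeasure ξ]
    (v : ℝ → ℝ) (hv : ∀ (y : M) (r : ℝ), (μ (ball y r)).toReal = v r)
    (N : ℕ) (x : Fin N → M) :
    (∫ r, (∫ y, ((Set.ncard {i : Fin N | x i ∈ ball y r} : ℝ) - N * v r) ^ 2 ∂μ) ∂ξ) +
      (∑ i : Fin N, ∑ j : Fin N,
        (1/2) * ∫ r, (μ (ball (x i) r ∆ ball (x j) r)).toReal ∂ξ)
      = (∫ r, (v r - (v r) ^ 2) ∂ξ) * (N : ℝ) ^ 2 := by
  classical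
  haveI : Nonempty M := by
    by_contra h
    rw [not_nonempty_iff] at h
    have h1 : μ Set.univ = 1 := measure_univ
    rw [Set.univ_eq_empty_iff.mpr h, measure_empty] at h1
    exact zero_ne_one h1
  obtain ⟨y₀⟩ := ‹Nonempty M›
  set m : Fin N → Fin N → ℝ → ℝ :=
    fun i j r => (μ (ball (x i) r ∩ ball (x j) r)).toReal with hm_def
  -- basic facts about v and m
  have hv_mono : Monotone v := by
    intro a b hab
    rw [← hv y₀ a, ← hv y₀ b]
    exact ENNReal.toReal_mono (measure_ne_top μ _) (measure_mono (ball_subset_ball hab))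
  have hv_nonneg : ∀ r, 0 ≤ v r := fun r => by rw [← hv y₀ r]; exact ENNReal.toReal_nonneg
  have hv_le_one : ∀ r, v r ≤ 1 := fun r => by
    rw [← hv y₀ r]; exact ENNReal.toReal_le_of_le_ofReal one_pos.le (by simpa using prob_le_one)
  have hm_mono : ∀ i j, Monotone (m i j) := by
    intro i j a b hab
    exact ENNReal.toReal_mono (measure_ne_top μ _)
      (measure_mono (Set.inter_subset_inter (ball_subset_ball hab) (ball_subset_ball hab)))
  have hm_nonneg : ∀ i j r, 0 ≤ m i j r := fun i j r => ENNReal.toReal_nonneg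
  have hm_le_one : ∀ i j r, m i j r ≤ 1 := fun i j r =>
    ENNReal.toReal_le_of_le_ofReal one_pos.le (by simpa using prob_le_one)
  have hv_int : Integrable v ξ := integ_aux hv_mono hv_nonneg hv_le_one
  have hv2_int : Integrable (fun r => (v r) ^ 2) ξ :=
    integ_aux (fun a b hab => pow_le_pow_left₀ (hv_nonneg a) (hv_mono hab) 2)
      (fun r => sq_nonneg _) (fun r => by
        calc (v r) ^ 2 ≤ 1 ^ 2 := pow_le_pow_left₀ (hv_nonneg r) (hv_le_one r) 2
        _ = 1 := one_pow 2)
  have hm_int : ∀ i j, Integrable (m i j) ξ := fun i j =>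
    integ_aux (hm_mono i j) (hm_nonneg i j) (hm_le_one i j)
  -- key pointwise identity for the λ-term
  have key : ∀ r, (∫ y, ((Set.ncard {i : Fin N | x i ∈ ball y r} : ℝ) - N * v r) ^ 2 ∂μ)
      = (∑ i : Fin N, ∑ j : Fin N, m i j r) - (N : ℝ) ^ 2 * (v r) ^ 2 := by
    intro r
    set c : ℝ := N * v r with hc
    have hcount : ∀ y : M, ((Set.ncard {i : Fin N | x i ∈ ball y r} : ℝ))
        = ∑ i : Fin N, (ball (x i) r).indicator (fun _ => (1:ℝ)) y := by
      intro y
      rw [Set.ncard_eq_toFinset_card', Set.toFinset_setOf, Finset.card_filter]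
      push_cast
      refine Finset.sum_congr rfl fun i _ => ?_
      simp [Set.indicator_apply, mem_ball, dist_comm]
    have hind : ∀ s : Set M, MeasurableSet s →
        Integrable (s.indicator (fun _ => (1:ℝ))) μ := fun s hs =>
      (integrable_indicator_iff hs).2 (integrableOn_const (measure_ne_top μ s))
    have hexp : ∀ y : M,
        ((Set.ncard {i : Fin N | x i ∈ ball y r} : ℝ) - N * v r) ^ 2
        = (∑ i : Fin N, ∑ j : Fin N,
            ((ball (x i) r ∩ ball (x j) r).indicator (fun _ => (1:ℝ)) y))
          - 2 * c * (∑ i : Fin N, (ball (x i) r).indicator (fun _ => (1:ℝ)) y) + c ^ 2 := by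
      intro y
      rw [hcount y]
      have hsq : (∑ i : Fin N, (ball (x i) r).indicator (fun _ => (1:ℝ)) y) ^ 2
          = ∑ i : Fin N, ∑ j : Fin N,
              ((ball (x i) r ∩ ball (x j) r).indicator (fun _ => (1:ℝ)) y) := by
        rw [sq, Finset.sum_mul_sum]
        refine Finset.sum_congr rfl fun i _ => Finset.sum_congr rfl fun j _ => ?_
        simp only [Set.indicator_apply, Set.mem_inter_iff]
        by_cases h1 : y ∈ ball (x i) r <;> by_cases h2 : y ∈ ball (x j) r <;> simp [h1, h2]
      rw [← hc, sub_sq, hsq]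
      ring
    rw [integral_congr_ae (ae_of_all _ hexp)]
    have hP : Integrable (fun y => ∑ i : Fin N, ∑ j : Fin N,
        ((ball (x i) r ∩ ball (x j) r).indicator (fun _ => (1:ℝ)) y)) μ :=
      integrable_finset_sum _ fun i _ => integrable_finset_sum _ fun j _ =>
        hind _ (measurableSet_ball.inter measurableSet_ball)
    have hG : Integrable (fun y => ∑ i : Fin N, (ball (x i) r).indicator (fun _ => (1:ℝ)) y) μ :=
      integrable_finset_sum _ fun i _ => hind _ measurableSet_ball
    have hQ : Integrable (fun y => 2 * c * ∑ i : Fin N,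
        (ball (x i) r).indicator (fun _ => (1:ℝ)) y) μ := hG.const_mul _
    have hPQ : Integrable (fun y => (∑ i : Fin N, ∑ j : Fin N,
        ((ball (x i) r ∩ ball (x j) r).indicator (fun _ => (1:ℝ)) y))
        - 2 * c * ∑ i : Fin N, (ball (x i) r).indicator (fun _ => (1:ℝ)) y) μ := hP.sub hQ
    rw [integral_add hPQ (integrable_const _),
      integral_sub hP hQ, integral_finset_sum _
        (fun i _ => integrable_finset_sum _ fun j _ =>
          hind _ (measurableSet_ball.inter measurableSet_ball)),
      integral_const_mul, integral_finset_sum _ (fun i _ => hind _ measurableSet_ball),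
      integral_const]
    have h1 : ∀ i : Fin N, ∫ y, (ball (x i) r).indicator (fun _ => (1:ℝ)) y ∂μ = v r := by
      intro i
      rw [integral_indicator_const (1:ℝ) measurableSet_ball, smul_eq_mul, mul_one, measureReal_def, hv]
    have h2 : ∀ i j : Fin N,
        ∫ y, ((ball (x i) r ∩ ball (x j) r).indicator (fun _ => (1:ℝ)) y) ∂μ = m i j r := by
      intro i j
      rw [integral_indicator_const (1:ℝ) (measurableSet_ball.inter measurableSet_ball),
        smul_eq_mul, mul_one, measureReal_def]
    have h3 : ∀ i : Fin N, ∫ y, ∑ j : Fin N,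
        ((ball (x i) r ∩ ball (x j) r).indicator (fun _ => (1:ℝ)) y) ∂μ
        = ∑ j : Fin N, m i j r := by
      intro i
      rw [integral_finset_sum _ (fun j _ =>
        hind _ (measurableSet_ball.inter measurableSet_ball))]
      exact Finset.sum_congr rfl fun j _ => h2 i j
    simp only [h1, h2, h3, Finset.sum_const, Finset.card_univ, Fintype.card_fin, measure_univ,
      probReal_univ, one_smul, nsmul_eq_mul, hc]
    ring
  -- symmetric difference identity
  have hΔ : ∀ (i j : Fin N) (r : ℝ),
      (μ (ball (x i) r ∆ ball (x j) r)).toReal = 2 * (v r - m i j r) := by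
    intro i j r
    have hAB : μ (ball (x i) r ∆ ball (x j) r)
        = μ (ball (x i) r \ ball (x j) r) + μ (ball (x j) r \ ball (x i) r) := by
      rw [Set.symmDiff_def, measure_union disjoint_sdiff_sdiff
        (measurableSet_ball.diff measurableSet_ball)]
    have hdiff1 : (μ (ball (x i) r \ ball (x j) r)).toReal = v r - m i j r := by
      have := measure_inter_add_diff (μ := μ) (ball (x i) r) (t := ball (x j) r) measurableSet_ball
      have h' : (μ (ball (x i) r ∩ ball (x j) r)).toReal
          + (μ (ball (x i) r \ ball (x j) r)).toReal = v r := by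
        rw [← ENNReal.toReal_add (measure_ne_top μ _) (measure_ne_top μ _), this, hv]
      linarith [h']
    have hdiff2 : (μ (ball (x j) r \ ball (x i) r)).toReal = v r - m i j r := by
      have := measure_inter_add_diff (μ := μ) (ball (x j) r) (t := ball (x i) r) measurableSet_ball
      have h' : (μ (ball (x j) r ∩ ball (x i) r)).toReal
          + (μ (ball (x j) r \ ball (x i) r)).toReal = v r := by
        rw [← ENNReal.toReal_add (measure_ne_top μ _) (measure_ne_top μ _), this, hv]
      rw [Set.inter_comm] at h'
      linarith [h']
    rw [hAB, ENNReal.toReal_add (measure_ne_top μ _) (measure_ne_top μ _), hdiff1, hdiff2]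
    ring
  have hhalf : ∀ i j : Fin N,
      (1/2 : ℝ) * ∫ r, (μ (ball (x i) r ∆ ball (x j) r)).toReal ∂ξ
        = ∫ r, (v r - m i j r) ∂ξ := by
    intro i j
    simp only [hΔ]
    rw [integral_const_mul]
    ring
  simp only [key, hhalf]
  have hvm_int : ∀ i j : Fin N, Integrable (fun r => v r - m i j r) ξ := fun i j =>
    hv_int.sub (hm_int i j)
  have hsum_swap : ∑ i : Fin N, ∑ j : Fin N, ∫ r, (v r - m i j r) ∂ξ
      = ∫ r, ∑ i : Fin N, ∑ j : Fin N, (v r - m i j r) ∂ξ := by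
    rw [integral_finset_sum _ (fun i _ => integrable_finset_sum _ fun j _ => hvm_int i j)]
    exact Finset.sum_congr rfl fun i _ =>
      (integral_finset_sum _ (fun j _ => hvm_int i j)).symm
  rw [hsum_swap]
  have hA_int : Integrable (fun r => (∑ i : Fin N, ∑ j : Fin N, m i j r) - (N:ℝ)^2 * (v r)^2) ξ :=
    (integrable_finset_sum _ fun i _ => integrable_finset_sum _ fun j _ => hm_int i j).sub
      (hv2_int.const_mul _)
  have hB_int : Integrable (fun r => ∑ i : Fin N, ∑ j : Fin N, (v r - m i j r)) ξ :=
    integrable_finset_sum _ fun i _ => integrable_finset_sum _ fun j _ => hvm_int i j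
  rw [← integral_add hA_int hB_int, ← integral_mul_const]
  refine integral_congr_ae (ae_of_all _ fun r => ?_)
  have hs : ∑ i : Fin N, ∑ j : Fin N, (v r - m i j r)
      = (N:ℝ)^2 * v r - ∑ i : Fin N, ∑ j : Fin N, m i j r := by
    simp [Finset.sum_sub_distrib, Finset.sum_const, Finset.card_univ]
    ring
  dsimp only
  rw [hs]
  ring
end
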